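/- arXiv:2302.11505 — 3 statements merged into one kernel-verified Lean document; each statement's English description precedes it below -/
import Mathlib

section
/- (Interaction regression, general decomposition.) Assume positivity and that the (2K+1)×(2K+1) covariance matrix of (D,A,AD) is positive definite. Then the interaction-regression slope satisfies Δ_inter = Σ_{a∈𝒜} ω_dce^i(a)·E[Y(1,a)−Y(0,a) | D=1, A=a] + Σ_{a∈𝒜} ω_ind^i(a)·(E[Y(0,a) | D=0, A=a] − E[Y(0,0) | D=0, A=0]) + Σ_{a∈𝒜} ω_dce^i(a)·(E[Y(0,a) | D=1, A=a] − E[Y(0,a) | D=0, A=a]). -/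
open MeasureTheory ProbabilityTheory BigOperators

noncomputable section

variable {Ω : Type} [MeasurableSpace Ω] {K : ℕ}

/-- Expectation of a real-valued random variable. -/
def Exp (P : Measure Ω) (Z : Ω → ℝ) : ℝ := ∫ ω, Z ω ∂P

/-- Probability of an event, as a real number. -/
def Pr (P : Measure Ω) (s : Set Ω) : ℝ := (P s).toReal

/-- Conditional expectation given an event, defined as a ratio. -/
def CE (P : Measure Ω) (Z : Ω → ℝ) (s : Set Ω) : ℝ :=
  Exp P (fun ω => Z ω * s.indicator (fun _ => (1:ℝ)) ω) / Pr P s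

/-- Covariance of two real-valued random variables. -/
def Cov (P : Measure Ω) (Z W : Ω → ℝ) : ℝ :=
  Exp P (fun ω => Z ω * W ω) - Exp P Z * Exp P W

/-- The event {D = d, A = a}. -/
def evDA (D : Ω → ℕ) (A : Ω → Fin K → ℕ) (d : ℕ) (a : Fin K → ℕ) : Set Ω :=
  {ω | D ω = d ∧ A ω = a}

/-- The event {D = d}. -/
def evD (D : Ω → ℕ) (d : ℕ) : Set Ω := {ω | D ω = d}

/-- The event {A = a}. -/
def evA (A : Ω → Fin K → ℕ) (a : Fin K → ℕ) : Set Ω := {ω | A ω = a}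

/-- π_d(a) = P(A = a | D = d). -/
def piP (P : Measure Ω) (D : Ω → ℕ) (A : Ω → Fin K → ℕ) (d : ℕ) (a : Fin K → ℕ) : ℝ :=
  Pr P (evDA D A d a) / Pr P (evD D d)

/-- The observed outcome Y = Σ_{(d,a)} Y(d,a)·1{D=d, A=a}. -/
def Yobs (D : Ω → ℕ) (A : Ω → Fin K → ℕ) (𝒜 : Finset (Fin K → ℕ))
    (Ypot : ℕ → (Fin K → ℕ) → Ω → ℝ) : Ω → ℝ :=
  fun ω => ∑ d ∈ ({0, 1} : Finset ℕ), ∑ a ∈ 𝒜,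
    Ypot d a ω * (if D ω = d ∧ A ω = a then (1:ℝ) else 0)

/-- μ(d,a) = E[Y(d,a)]. -/
def muP (P : Measure Ω) (Ypot : ℕ → (Fin K → ℕ) → Ω → ℝ) (d : ℕ) (a : Fin K → ℕ) : ℝ :=
  Exp P (Ypot d a)

/-- The random vector (D, A) as a real-valued family indexed by Unit ⊕ Fin K. -/
def DAvec (D : Ω → ℕ) (A : Ω → Fin K → ℕ) : Unit ⊕ Fin K → Ω → ℝ :=
  Sum.elim (fun _ ω => (D ω : ℝ)) (fun j ω => (A ω j : ℝ))

/-- The (K+1)×(K+1) covariance matrix of (D, A). -/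
def covDAmat (P : Measure Ω) (D : Ω → ℕ) (A : Ω → Fin K → ℕ) :
    Matrix (Unit ⊕ Fin K) (Unit ⊕ Fin K) ℝ :=
  Matrix.of fun i j => Cov P (DAvec D A i) (DAvec D A j)

/-- The K×K covariance matrix Var(A). -/
def varAmat (P : Measure Ω) (A : Ω → Fin K → ℕ) : Matrix (Fin K) (Fin K) ℝ :=
  Matrix.of fun i j => Cov P (fun ω => (A ω i : ℝ)) (fun ω => (A ω j : ℝ))

/-- The row vector Cov(D, A). -/
def covDA (P : Measure Ω) (D : Ω → ℕ) (A : Ω → Fin K → ℕ) : Fin K → ℝ :=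
  fun j => Cov P (fun ω => (D ω : ℝ)) (fun ω => (A ω j : ℝ))

/-- M = Cov(D,A) ⬝ Var(A)⁻¹. -/
def Mlong (P : Measure Ω) (D : Ω → ℕ) (A : Ω → Fin K → ℕ) : Fin K → ℝ :=
  fun j => ∑ i, covDA P D A i * (varAmat P A)⁻¹ i j

/-- Var(D). -/
def varD (P : Measure Ω) (D : Ω → ℕ) : ℝ :=
  Cov P (fun ω => (D ω : ℝ)) (fun ω => (D ω : ℝ))

/-- denom = Var(D) − Cov(D,A)·Var(A)⁻¹·Cov(A,D). -/
def denomL (P : Measure Ω) (D : Ω → ℕ) (A : Ω → Fin K → ℕ) : ℝ :=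
  varD P D - ∑ j, Mlong P D A j * covDA P D A j

/-- The long-regression weight ω_dce^l(a). -/
def wdceL (P : Measure Ω) (D : Ω → ℕ) (A : Ω → Fin K → ℕ) (a : Fin K → ℕ) : ℝ :=
  piP P D A 1 a *
    (varD P D - Pr P (evD D 1) *
      ∑ j, Mlong P D A j * ((a j : ℝ) - Exp P (fun ω => (A ω j : ℝ)))) / denomL P D A

/-- The long-regression weight ω_ind^l(a). -/
def windL (P : Measure Ω) (D : Ω → ℕ) (A : Ω → Fin K → ℕ) (a : Fin K → ℕ) : ℝ :=
  (varD P D * (piP P D A 1 a - piP P D A 0 a) -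
    Pr P (evA A a) * ∑ j, Mlong P D A j * ((a j : ℝ) - Exp P (fun ω => (A ω j : ℝ))))
  / denomL P D A

/-- The residual of the long regression of Y on (1, D, A). -/
def residLong (D : Ω → ℕ) (A : Ω → Fin K → ℕ) (𝒜 : Finset (Fin K → ℕ))
    (Ypot : ℕ → (Fin K → ℕ) → Ω → ℝ) (Δ θ₀ : ℝ) (θ : Fin K → ℝ) : Ω → ℝ :=
  fun ω => Yobs D A 𝒜 Ypot ω - Δ * (D ω : ℝ) - θ₀ - ∑ j, θ j * (A ω j : ℝ)

/-- The random vector W = (A, A·D) as a real-valued family indexed by Fin K ⊕ Fin K. -/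
def Wvec (D : Ω → ℕ) (A : Ω → Fin K → ℕ) : Fin K ⊕ Fin K → Ω → ℝ :=
  Sum.elim (fun j ω => (A ω j : ℝ)) (fun j ω => (A ω j : ℝ) * (D ω : ℝ))

/-- The 2K×2K covariance matrix Var(W), W = (A, AD). -/
def varWmat (P : Measure Ω) (D : Ω → ℕ) (A : Ω → Fin K → ℕ) :
    Matrix (Fin K ⊕ Fin K) (Fin K ⊕ Fin K) ℝ :=
  Matrix.of fun u v => Cov P (Wvec D A u) (Wvec D A v)

/-- The row vector Cov(D, W). -/
def covDW (P : Measure Ω) (D : Ω → ℕ) (A : Ω → Fin K → ℕ) : Fin K ⊕ Fin K → ℝ :=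
  fun u => Cov P (fun ω => (D ω : ℝ)) (Wvec D A u)

/-- M = Cov(D,W) ⬝ Var(W)⁻¹ for the interaction regression. -/
def Minter (P : Measure Ω) (D : Ω → ℕ) (A : Ω → Fin K → ℕ) : Fin K ⊕ Fin K → ℝ :=
  fun v => ∑ u, covDW P D A u * (varWmat P D A)⁻¹ u v

/-- denom = Var(D) − M·Cov(W,D) for the interaction regression. -/
def denomI (P : Measure Ω) (D : Ω → ℕ) (A : Ω → Fin K → ℕ) : ℝ :=
  varD P D - ∑ v, Minter P D A v * covDW P D A v

/-- E[A_j | D = 1]. -/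
def condA1 (P : Measure Ω) (D : Ω → ℕ) (A : Ω → Fin K → ℕ) (j : Fin K) : ℝ :=
  CE P (fun ω => (A ω j : ℝ)) (evD D 1)

/-- The random vector (D, A, AD) as a real-valued family. -/
def DADvec (D : Ω → ℕ) (A : Ω → Fin K → ℕ) : Unit ⊕ (Fin K ⊕ Fin K) → Ω → ℝ :=
  Sum.elim (fun _ ω => (D ω : ℝ)) (Wvec D A)

/-- The (2K+1)×(2K+1) covariance matrix of (D, A, AD). -/
def covDADmat (P : Measure Ω) (D : Ω → ℕ) (A : Ω → Fin K → ℕ) :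
    Matrix (Unit ⊕ (Fin K ⊕ Fin K)) (Unit ⊕ (Fin K ⊕ Fin K)) ℝ :=
  Matrix.of fun i j => Cov P (DADvec D A i) (DADvec D A j)

/-- The interaction-regression weight ω_dce^i(a). -/
def wdceI (P : Measure Ω) (D : Ω → ℕ) (A : Ω → Fin K → ℕ) (a : Fin K → ℕ) : ℝ :=
  piP P D A 1 a *
    (varD P D
      - Pr P (evD D 1) *
          ∑ j, Minter P D A (Sum.inl j) * ((a j : ℝ) - Exp P (fun ω => (A ω j : ℝ)))
      - Pr P (evD D 1) *
          ∑ j, Minter P D A (Sum.inr j) * ((a j : ℝ) - Pr P (evD D 1) * condA1 P D A j))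
  / denomI P D A

/-- The interaction-regression weight ω_ind^i(a). -/
def windI (P : Measure Ω) (D : Ω → ℕ) (A : Ω → Fin K → ℕ) (a : Fin K → ℕ) : ℝ :=
  (varD P D * (piP P D A 1 a - piP P D A 0 a)
    - ∑ j, Minter P D A (Sum.inl j) * Pr P (evA A a) * ((a j : ℝ) - Exp P (fun ω => (A ω j : ℝ)))
    - Pr P (evD D 1) *
        ∑ j, Minter P D A (Sum.inr j) *
          (piP P D A 1 a * (a j : ℝ) - Pr P (evA A a) * condA1 P D A j))
  / denomI P D A

/-- The residual of the interaction regression of Y on (1, D, A, AD). -/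
def residInter (D : Ω → ℕ) (A : Ω → Fin K → ℕ) (𝒜 : Finset (Fin K → ℕ))
    (Ypot : ℕ → (Fin K → ℕ) → Ω → ℝ) (Δ θ₀ : ℝ) (θ lam : Fin K → ℝ) : Ω → ℝ :=
  fun ω => Yobs D A 𝒜 Ypot ω - Δ * (D ω : ℝ) - θ₀ - (∑ j, θ j * (A ω j : ℝ))
    - ∑ j, lam j * (A ω j : ℝ) * (D ω : ℝ)

/-- P(D = d | A = a). -/
def condDgivenA (P : Measure Ω) (D : Ω → ℕ) (A : Ω → Fin K → ℕ) (d : ℕ) (a : Fin K → ℕ) : ℝ :=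
  Pr P (evDA D A d a) / Pr P (evA A a)

/-- The SFE weight ω_sfe(a). -/
def wsfe (P : Measure Ω) (D : Ω → ℕ) (A : Ω → Fin K → ℕ) (𝒜 : Finset (Fin K → ℕ))
    (a : Fin K → ℕ) : ℝ :=
  condDgivenA P D A 1 a * condDgivenA P D A 0 a * Pr P (evA A a) /
    ∑ a' ∈ 𝒜, condDgivenA P D A 1 a' * condDgivenA P D A 0 a' * Pr P (evA A a')

/-- The residual of the SFE regression of Y on (D, {1{A=a}}). -/
def residSFE (D : Ω → ℕ) (A : Ω → Fin K → ℕ) (𝒜 : Finset (Fin K → ℕ))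
    (Ypot : ℕ → (Fin K → ℕ) → Ω → ℝ) (Δ : ℝ) (θ : (Fin K → ℕ) → ℝ) : Ω → ℝ :=
  fun ω => Yobs D A 𝒜 Ypot ω - Δ * (D ω : ℝ) -
    ∑ a ∈ 𝒜, θ a * (if A ω = a then (1:ℝ) else 0)

/-- The residual of the saturated regression of Y on ({1{A=a}}, {D·1{A=a}}). -/
def residSAT (D : Ω → ℕ) (A : Ω → Fin K → ℕ) (𝒜 : Finset (Fin K → ℕ))
    (Ypot : ℕ → (Fin K → ℕ) → Ω → ℝ) (γ Δsat : (Fin K → ℕ) → ℝ) : Ω → ℝ :=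
  fun ω => Yobs D A 𝒜 Ypot ω - (∑ a ∈ 𝒜, γ a * (if A ω = a then (1:ℝ) else 0)) -
    ∑ a ∈ 𝒜, Δsat a * (D ω : ℝ) * (if A ω = a then (1:ℝ) else 0)

section AuxIRD

variable {Ω : Type} [MeasurableSpace Ω] {K : ℕ}

lemma measurableSet_evDA (D : Ω → ℕ) (A : Ω → Fin K → ℕ) (hD : Measurable D) (hA : Measurable A)
    (d : ℕ) (a : Fin K → ℕ) : MeasurableSet (evDA D A d a) := by
  have h : evDA D A d a = D ⁻¹' {d} ∩ A ⁻¹' {a} := by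
    ext ω; simp [evDA]
  rw [h]
  exact (hD (MeasurableSet.singleton d)).inter (hA (MeasurableSet.singleton a))

lemma cell_decomp (D : Ω → ℕ) (A : Ω → Fin K → ℕ) (𝒜 : Finset (Fin K → ℕ))
    (hDbin : ∀ ω, D ω = 0 ∨ D ω = 1) (hAsupp : ∀ ω, A ω ∈ 𝒜)
    (g : ℕ → (Fin K → ℕ) → ℝ) (ω : Ω) :
    g (D ω) (A ω) = ∑ d ∈ ({0,1} : Finset ℕ), ∑ a ∈ 𝒜,
      (if D ω = d ∧ A ω = a then g d a else 0) := by
  have hd : D ω ∈ ({0,1} : Finset ℕ) := by rcases hDbin ω with h | h <;> simp [h]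
  have h1 : ∀ d ∈ ({0,1} : Finset ℕ), d ≠ D ω →
      (∑ a ∈ 𝒜, if D ω = d ∧ A ω = a then g d a else 0) = 0 := by
    intro d _ hd'
    exact Finset.sum_eq_zero fun a _ => by
      have hne : ¬ (D ω = d) := fun h => hd' h.symm
      simp [hne]
  rw [Finset.sum_eq_single_of_mem (D ω) hd h1]
  have h2 : ∀ a ∈ 𝒜, a ≠ A ω → (if D ω = D ω ∧ A ω = a then g (D ω) a else 0) = 0 := by
    intro a _ ha
    have hne : ¬ (A ω = a) := fun h => ha h.symm
    simp [hne]
  rw [Finset.sum_eq_single_of_mem (A ω) (hAsupp ω) h2]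
  simp

lemma mul_ite_eq_indicator (D : Ω → ℕ) (A : Ω → Fin K → ℕ) (Z : Ω → ℝ) (d : ℕ) (a : Fin K → ℕ) :
    (fun ω => Z ω * (if D ω = d ∧ A ω = a then (1:ℝ) else 0))
      = (evDA D A d a).indicator Z := by
  funext ω
  by_cases h : D ω = d ∧ A ω = a
  · rw [if_pos h, Set.indicator_of_mem (show ω ∈ evDA D A d a from h), mul_one]
  · rw [if_neg h, Set.indicator_of_notMem (show ω ∉ evDA D A d a from h), mul_zero]

lemma exp_fun_cells (P : Measure Ω) [IsProbabilityMeasure P]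
    (D : Ω → ℕ) (A : Ω → Fin K → ℕ) (𝒜 : Finset (Fin K → ℕ))
    (hD : Measurable D) (hA : Measurable A)
    (hDbin : ∀ ω, D ω = 0 ∨ D ω = 1) (hAsupp : ∀ ω, A ω ∈ 𝒜)
    (g : ℕ → (Fin K → ℕ) → ℝ) :
    Exp P (fun ω => g (D ω) (A ω))
      = ∑ d ∈ ({0,1} : Finset ℕ), ∑ a ∈ 𝒜, g d a * Pr P (evDA D A d a) := by
  have key : (fun ω => g (D ω) (A ω))
      = fun ω => ∑ d ∈ ({0,1} : Finset ℕ), ∑ a ∈ 𝒜,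
          (evDA D A d a).indicator (fun _ => g d a) ω := by
    funext ω
    rw [cell_decomp D A 𝒜 hDbin hAsupp g ω]
    refine Finset.sum_congr rfl fun d _ => Finset.sum_congr rfl fun a _ => ?_
    by_cases h : D ω = d ∧ A ω = a
    · rw [if_pos h, Set.indicator_of_mem (show ω ∈ evDA D A d a from h)]
    · rw [if_neg h, Set.indicator_of_notMem (show ω ∉ evDA D A d a from h)]
  unfold Exp
  rw [key, MeasureTheory.integral_finset_sum]
  · refine Finset.sum_congr rfl fun d _ => ?_
    rw [MeasureTheory.integral_finset_sum]
    · refine Finset.sum_congr rfl fun a _ => ?_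
      rw [MeasureTheory.integral_indicator_const (g d a) (measurableSet_evDA D A hD hA d a)]
      simp [Pr, mul_comm, Measure.real]
    · intro a _
      exact (MeasureTheory.integrable_const _).indicator (measurableSet_evDA D A hD hA d a)
  · intro d _
    exact MeasureTheory.integrable_finset_sum _ fun a _ =>
      (MeasureTheory.integrable_const _).indicator (measurableSet_evDA D A hD hA d a)

lemma integrable_fun_cells (P : Measure Ω) [IsProbabilityMeasure P]
    (D : Ω → ℕ) (A : Ω → Fin K → ℕ) (𝒜 : Finset (Fin K → ℕ))
    (hD : Measurable D) (hA : Measurable A)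
    (hDbin : ∀ ω, D ω = 0 ∨ D ω = 1) (hAsupp : ∀ ω, A ω ∈ 𝒜)
    (g : ℕ → (Fin K → ℕ) → ℝ) :
    MeasureTheory.Integrable (fun ω => g (D ω) (A ω)) P := by
  have key : (fun ω => g (D ω) (A ω))
      = fun ω => ∑ d ∈ ({0,1} : Finset ℕ), ∑ a ∈ 𝒜,
          (evDA D A d a).indicator (fun _ => g d a) ω := by
    funext ω
    rw [cell_decomp D A 𝒜 hDbin hAsupp g ω]
    refine Finset.sum_congr rfl fun d _ => Finset.sum_congr rfl fun a _ => ?_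
    by_cases h : D ω = d ∧ A ω = a
    · rw [if_pos h, Set.indicator_of_mem (show ω ∈ evDA D A d a from h)]
    · rw [if_neg h, Set.indicator_of_notMem (show ω ∉ evDA D A d a from h)]
  rw [key]
  exact MeasureTheory.integrable_finset_sum _ fun d _ =>
    MeasureTheory.integrable_finset_sum _ fun a _ =>
      (MeasureTheory.integrable_const _).indicator (measurableSet_evDA D A hD hA d a)

lemma pr_eq_exp (P : Measure Ω) [IsProbabilityMeasure P] (s : Set Ω) (hs : MeasurableSet s) :
    Pr P s = Exp P (fun ω => s.indicator (fun _ => (1:ℝ)) ω) := by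
  unfold Pr Exp
  rw [MeasureTheory.integral_indicator_const (1:ℝ) hs]
  simp [Measure.real]

end AuxIRD


section AuxIRD2

variable {Ω : Type} [MeasurableSpace Ω] {K : ℕ}

lemma yobs_mul_pointwise (D : Ω → ℕ) (A : Ω → Fin K → ℕ) (𝒜 : Finset (Fin K → ℕ))
    (Ypot : ℕ → (Fin K → ℕ) → Ω → ℝ) (g : ℕ → (Fin K → ℕ) → ℝ) (ω : Ω) :
    Yobs D A 𝒜 Ypot ω * g (D ω) (A ω)
      = ∑ d ∈ ({0,1} : Finset ℕ), ∑ a ∈ 𝒜,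
          g d a * (Ypot d a ω * (if D ω = d ∧ A ω = a then (1:ℝ) else 0)) := by
  unfold Yobs
  rw [Finset.sum_mul]
  refine Finset.sum_congr rfl fun d _ => ?_
  rw [Finset.sum_mul]
  refine Finset.sum_congr rfl fun a _ => ?_
  by_cases h : D ω = d ∧ A ω = a
  · rw [if_pos h, h.1, h.2]
    ring
  · rw [if_neg h]
    ring

lemma exp_yobs_cells (P : Measure Ω) [IsProbabilityMeasure P]
    (D : Ω → ℕ) (A : Ω → Fin K → ℕ) (𝒜 : Finset (Fin K → ℕ))
    (Ypot : ℕ → (Fin K → ℕ) → Ω → ℝ)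
    (hD : Measurable D) (hA : Measurable A)
    (hInt : ∀ d ∈ ({0, 1} : Finset ℕ), ∀ a ∈ 𝒜, MeasureTheory.Integrable (Ypot d a) P)
    (g : ℕ → (Fin K → ℕ) → ℝ) :
    Exp P (fun ω => Yobs D A 𝒜 Ypot ω * g (D ω) (A ω))
      = ∑ d ∈ ({0,1} : Finset ℕ), ∑ a ∈ 𝒜,
          g d a * Exp P (fun ω => Ypot d a ω * (if D ω = d ∧ A ω = a then (1:ℝ) else 0)) := by
  unfold Exp
  have key : (fun ω => Yobs D A 𝒜 Ypot ω * g (D ω) (A ω))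
      = fun ω => ∑ d ∈ ({0,1} : Finset ℕ), ∑ a ∈ 𝒜,
          g d a * (Ypot d a ω * (if D ω = d ∧ A ω = a then (1:ℝ) else 0)) :=
    funext fun ω => yobs_mul_pointwise D A 𝒜 Ypot g ω
  rw [key, MeasureTheory.integral_finset_sum]
  · refine Finset.sum_congr rfl fun d hd => ?_
    rw [MeasureTheory.integral_finset_sum]
    · refine Finset.sum_congr rfl fun a ha => ?_
      rw [MeasureTheory.integral_const_mul]
    · intro a ha
      refine MeasureTheory.Integrable.const_mul ?_ _
      rw [mul_ite_eq_indicator D A (Ypot d a) d a]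
      exact (hInt d hd a ha).indicator (measurableSet_evDA D A hD hA d a)
  · intro d hd
    refine MeasureTheory.integrable_finset_sum _ fun a ha => ?_
    refine MeasureTheory.Integrable.const_mul ?_ _
    rw [mul_ite_eq_indicator D A (Ypot d a) d a]
    exact (hInt d hd a ha).indicator (measurableSet_evDA D A hD hA d a)

lemma integrable_yobs_mul (P : Measure Ω) [IsProbabilityMeasure P]
    (D : Ω → ℕ) (A : Ω → Fin K → ℕ) (𝒜 : Finset (Fin K → ℕ))
    (Ypot : ℕ → (Fin K → ℕ) → Ω → ℝ)
    (hD : Measurable D) (hA : Measurable A)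
    (hInt : ∀ d ∈ ({0, 1} : Finset ℕ), ∀ a ∈ 𝒜, MeasureTheory.Integrable (Ypot d a) P)
    (g : ℕ → (Fin K → ℕ) → ℝ) :
    MeasureTheory.Integrable (fun ω => Yobs D A 𝒜 Ypot ω * g (D ω) (A ω)) P := by
  have key : (fun ω => Yobs D A 𝒜 Ypot ω * g (D ω) (A ω))
      = fun ω => ∑ d ∈ ({0,1} : Finset ℕ), ∑ a ∈ 𝒜,
          g d a * (Ypot d a ω * (if D ω = d ∧ A ω = a then (1:ℝ) else 0)) :=
    funext fun ω => yobs_mul_pointwise D A 𝒜 Ypot g ω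
  rw [key]
  refine MeasureTheory.integrable_finset_sum _ fun d hd =>
    MeasureTheory.integrable_finset_sum _ fun a ha => ?_
  refine MeasureTheory.Integrable.const_mul ?_ _
  rw [mul_ite_eq_indicator D A (Ypot d a) d a]
  exact (hInt d hd a ha).indicator (measurableSet_evDA D A hD hA d a)

lemma cov_comm (P : Measure Ω) (Z W : Ω → ℝ) : Cov P Z W = Cov P W Z := by
  unfold Cov
  have h : (fun ω => Z ω * W ω) = fun ω => W ω * Z ω := funext fun ω => mul_comm _ _
  rw [h]
  ring

lemma sum_affine {α κ : Type} (s : Finset α) (t : Finset κ)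
    (w : α → ℝ) (c : ℝ) (m : κ → ℝ) (v : κ → α → ℝ) :
    ∑ a ∈ s, (c - ∑ j ∈ t, m j * v j a) * w a
      = c * ∑ a ∈ s, w a - ∑ j ∈ t, m j * ∑ a ∈ s, v j a * w a := by
  have ha : ∀ a ∈ s, (c - ∑ j ∈ t, m j * v j a) * w a
      = c * w a - ∑ j ∈ t, m j * (v j a * w a) := by
    intro a _
    have h0 : (c - ∑ j ∈ t, m j * v j a) * w a
        = c * w a - (∑ j ∈ t, m j * v j a) * w a := by ring
    rw [h0, Finset.sum_mul]
    congr 1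
    exact Finset.sum_congr rfl fun j _ => by ring
  rw [Finset.sum_congr rfl ha, Finset.sum_sub_distrib, ← Finset.mul_sum]
  congr 1
  rw [Finset.sum_comm]
  exact Finset.sum_congr rfl fun j _ => by rw [Finset.mul_sum]

lemma sum_affine2 {α κ : Type} (s : Finset α) (t : Finset κ)
    (v0 : α → ℝ) (w : α → ℝ) (c : ℝ) (m : κ → ℝ) (v : κ → α → ℝ) :
    ∑ a ∈ s, v0 a * ((c - ∑ j ∈ t, m j * v j a) * w a)
      = c * ∑ a ∈ s, v0 a * w a - ∑ j ∈ t, m j * ∑ a ∈ s, v j a * (v0 a * w a) := by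
  have ha : ∀ a ∈ s, v0 a * ((c - ∑ j ∈ t, m j * v j a) * w a)
      = c * (v0 a * w a) - ∑ j ∈ t, m j * (v j a * (v0 a * w a)) := by
    intro a _
    have h0 : v0 a * ((c - ∑ j ∈ t, m j * v j a) * w a)
        = c * (v0 a * w a) - v0 a * ((∑ j ∈ t, m j * v j a) * w a) := by ring
    rw [h0, Finset.sum_mul, Finset.mul_sum]
    congr 1
    exact Finset.sum_congr rfl fun j _ => by ring
  rw [Finset.sum_congr rfl ha, Finset.sum_sub_distrib, ← Finset.mul_sum]
  congr 1
  rw [Finset.sum_comm]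
  exact Finset.sum_congr rfl fun j _ => by rw [Finset.mul_sum]

lemma sum_mul_const_mid {κ : Type} (t : Finset κ) (m : κ → ℝ) (c : ℝ) (v : κ → ℝ) :
    ∑ j ∈ t, m j * (c * v j) = c * ∑ j ∈ t, m j * v j := by
  rw [Finset.mul_sum]
  exact Finset.sum_congr rfl fun j _ => by ring

end AuxIRD2


section AuxIRD3

lemma sum_split_sub {κ : Type} (t : Finset κ) (m v x : κ → ℝ) :
    ∑ j ∈ t, m j * (v j - x j) = (∑ j ∈ t, m j * v j) - ∑ j ∈ t, m j * x j := by
  rw [← Finset.sum_sub_distrib]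
  exact Finset.sum_congr rfl fun j _ => by ring

lemma sum_split_aff {κ : Type} (t : Finset κ) (m v x y : κ → ℝ) :
    ∑ j ∈ t, m j * (v j - (x j + y j))
      = (∑ j ∈ t, m j * v j) - ((∑ j ∈ t, m j * x j) + ∑ j ∈ t, m j * y j) := by
  rw [← Finset.sum_add_distrib, ← Finset.sum_sub_distrib]
  exact Finset.sum_congr rfl fun j _ => by ring

lemma sum_add_mul' {κ : Type} (t : Finset κ) (m1 m2 v : κ → ℝ) :
    ∑ j ∈ t, (m1 j + m2 j) * v j = (∑ j ∈ t, m1 j * v j) + ∑ j ∈ t, m2 j * v j := by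
  rw [← Finset.sum_add_distrib]
  exact Finset.sum_congr rfl fun j _ => by ring

lemma sum_split2 {κ : Type} (t : Finset κ) (m x z : κ → ℝ) (c : ℝ) :
    ∑ i ∈ t, m i * (x i - z i * c) = (∑ i ∈ t, m i * x i) - (∑ i ∈ t, m i * z i) * c := by
  rw [Finset.sum_mul, ← Finset.sum_sub_distrib]
  exact Finset.sum_congr rfl fun i _ => by ring

lemma sum_split3 {κ : Type} (t : Finset κ) (m x y z w : κ → ℝ) (c : ℝ) :
    ∑ i ∈ t, m i * ((x i + y i) - (z i + w i) * c)
      = (∑ i ∈ t, m i * x i) + (∑ i ∈ t, m i * y i)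
        - ((∑ i ∈ t, m i * z i) + ∑ i ∈ t, m i * w i) * c := by
  rw [add_mul, Finset.sum_mul, Finset.sum_mul, ← Finset.sum_add_distrib,
    ← Finset.sum_add_distrib, ← Finset.sum_sub_distrib]
  exact Finset.sum_congr rfl fun i _ => by ring

lemma sum_split3b {κ : Type} (t : Finset κ) (m x z w : κ → ℝ) (c : ℝ) :
    ∑ i ∈ t, m i * (x i - (z i + w i) * c)
      = (∑ i ∈ t, m i * x i) - ((∑ i ∈ t, m i * z i) + ∑ i ∈ t, m i * w i) * c := by
  rw [add_mul, Finset.sum_mul, Finset.sum_mul, ← Finset.sum_add_distrib,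
    ← Finset.sum_sub_distrib]
  exact Finset.sum_congr rfl fun i _ => by ring

lemma sum_split_c {κ : Type} (t : Finset κ) (m x y z : κ → ℝ) (c : ℝ) :
    ∑ i ∈ t, m i * (x i - c * (y i + z i))
      = (∑ i ∈ t, m i * x i) - c * ((∑ i ∈ t, m i * y i) + ∑ i ∈ t, m i * z i) := by
  rw [mul_add, Finset.mul_sum, Finset.mul_sum, ← Finset.sum_add_distrib,
    ← Finset.sum_sub_distrib]
  exact Finset.sum_congr rfl fun i _ => by ring

lemma sum_split_c2 {κ : Type} (t : Finset κ) (m x y : κ → ℝ) (c : ℝ) :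
    ∑ i ∈ t, m i * (x i - c * y i)
      = (∑ i ∈ t, m i * x i) - c * ∑ i ∈ t, m i * y i := by
  rw [Finset.mul_sum, ← Finset.sum_sub_distrib]
  exact Finset.sum_congr rfl fun i _ => by ring

lemma sum_affine_add {α κ : Type} (s : Finset α) (t : Finset κ)
    (w : α → ℝ) (c : ℝ) (m : κ → ℝ) (v : κ → α → ℝ) :
    ∑ a ∈ s, (c + ∑ j ∈ t, m j * v j a) * w a
      = c * ∑ a ∈ s, w a + ∑ j ∈ t, m j * ∑ a ∈ s, v j a * w a := by
  have ha : ∀ a ∈ s, (c + ∑ j ∈ t, m j * v j a) * w a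
      = c * w a + ∑ j ∈ t, m j * (v j a * w a) := by
    intro a _
    have h0 : (c + ∑ j ∈ t, m j * v j a) * w a
        = c * w a + (∑ j ∈ t, m j * v j a) * w a := by ring
    rw [h0, Finset.sum_mul]
    congr 1
    exact Finset.sum_congr rfl fun j _ => by ring
  rw [Finset.sum_congr rfl ha, Finset.sum_add_distrib, ← Finset.mul_sum]
  congr 1
  rw [Finset.sum_comm]
  exact Finset.sum_congr rfl fun j _ => by rw [Finset.mul_sum]

lemma assemble (E1 E0 c1 c0 cX c00 w1 w0 q1 q0 q00 dn : ℝ)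
    (hq1 : q1 ≠ 0) (hq0 : q0 ≠ 0) (hq00 : q00 ≠ 0) (hdn : dn ≠ 0)
    (hw1 : w1 = q1 * E1 / dn) (hw0 : w0 = (q1 * E1 + q0 * E0) / dn) :
    w1 * ((c1 - cX) / q1) + w0 * (c0 / q0 - c00 / q00) + w1 * (cX / q1 - c0 / q0)
      = E1 * c1 / dn + E0 * c0 / dn - w0 * (c00 / q00) := by
  subst hw1 hw0
  field_simp
  ring

end AuxIRD3

set_option maxHeartbeats 2000000 in
/-- Interaction regression, general decomposition (Theorem B.4 / thm:inter_pre). -/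
theorem interaction_regression_decomposition
    (P : Measure Ω) [IsProbabilityMeasure P]
    (D : Ω → ℕ) (A : Ω → Fin K → ℕ) (𝒜 : Finset (Fin K → ℕ))
    (Ypot : ℕ → (Fin K → ℕ) → Ω → ℝ)
    (hD : Measurable D) (hA : Measurable A)
    (hDbin : ∀ ω, D ω = 0 ∨ D ω = 1)
    (hAsupp : ∀ ω, A ω ∈ 𝒜) (h𝒜0 : (0 : Fin K → ℕ) ∈ 𝒜)
    (hInt : ∀ d ∈ ({0, 1} : Finset ℕ), ∀ a ∈ 𝒜, Integrable (Ypot d a) P)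
    (hpos : ∀ d ∈ ({0, 1} : Finset ℕ), ∀ a ∈ 𝒜, 0 < Pr P (evDA D A d a))
    (hPD : (covDADmat P D A).PosDef)
    (Δinter θ₀ : ℝ) (θ lam : Fin K → ℝ)
    (hO1 : Exp P (residInter D A 𝒜 Ypot Δinter θ₀ θ lam) = 0)
    (hO2 : Exp P (fun ω => residInter D A 𝒜 Ypot Δinter θ₀ θ lam ω * (D ω : ℝ)) = 0)
    (hO3 : ∀ j : Fin K, Exp P (fun ω => residInter D A 𝒜 Ypot Δinter θ₀ θ lam ω * (A ω j : ℝ)) = 0)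
    (hO4 : ∀ j : Fin K,
      Exp P (fun ω => residInter D A 𝒜 Ypot Δinter θ₀ θ lam ω * (A ω j : ℝ) * (D ω : ℝ)) = 0)
    :
    Δinter
      = (∑ a ∈ 𝒜, wdceI P D A a *
            CE P (fun ω => Ypot 1 a ω - Ypot 0 a ω) (evDA D A 1 a))
        + (∑ a ∈ 𝒜, windI P D A a *
            (CE P (Ypot 0 a) (evDA D A 0 a) - CE P (Ypot 0 0) (evDA D A 0 0)))
        + (∑ a ∈ 𝒜, wdceI P D A a *
            (CE P (Ypot 0 a) (evDA D A 1 a) - CE P (Ypot 0 a) (evDA D A 0 a))) := by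
  have h01 : ∀ f : ℕ → ℝ, ∑ d ∈ ({0,1} : Finset ℕ), f d = f 0 + f 1 := fun f =>
    Finset.sum_pair (by norm_num)
  set q : ℕ → (Fin K → ℕ) → ℝ := fun d a => Pr P (evDA D A d a) with hq_def
  have hPrDA : ∀ d a, Pr P (evDA D A d a) = q d a := fun _ _ => rfl
  have hE : ∀ g : ℕ → (Fin K → ℕ) → ℝ, Exp P (fun ω => g (D ω) (A ω))
      = ∑ d ∈ ({0,1} : Finset ℕ), ∑ a ∈ 𝒜, g d a * q d a :=
    fun g => exp_fun_cells P D A 𝒜 hD hA hDbin hAsupp g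
  have hq0pos : ∀ a ∈ 𝒜, 0 < q 0 a := fun a ha => hpos 0 (by norm_num) a ha
  have hq1pos : ∀ a ∈ 𝒜, 0 < q 1 a := fun a ha => hpos 1 (by norm_num) a ha
  have hq0ne : ∀ a ∈ 𝒜, q 0 a ≠ 0 := fun a ha => (hq0pos a ha).ne'
  have hq1ne : ∀ a ∈ 𝒜, q 1 a ≠ 0 := fun a ha => (hq1pos a ha).ne'
  have hp0pos : 0 < ∑ a ∈ 𝒜, q 0 a := Finset.sum_pos hq0pos ⟨0, h𝒜0⟩
  have hp1pos : 0 < ∑ a ∈ 𝒜, q 1 a := Finset.sum_pos hq1pos ⟨0, h𝒜0⟩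
  have hp0ne : (∑ a ∈ 𝒜, q 0 a) ≠ 0 := hp0pos.ne'
  have hp1ne : (∑ a ∈ 𝒜, q 1 a) ≠ 0 := hp1pos.ne'
  have hsum1 : (∑ a ∈ 𝒜, q 0 a) + (∑ a ∈ 𝒜, q 1 a) = 1 := by
    have h := hE (fun _ _ => (1:ℝ))
    have h1 : Exp P (fun _ : Ω => (1:ℝ)) = 1 := by simp [Exp]
    rw [h1, h01] at h
    simp only [one_mul] at h
    linarith
  have hp0eq : (∑ a ∈ 𝒜, q 0 a) = 1 - ∑ a ∈ 𝒜, q 1 a := by linarith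
  -- basic moments
  have hED : Exp P (fun ω => ((D ω : ℕ) : ℝ)) = ∑ a ∈ 𝒜, q 1 a := by
    have h := hE (fun d _ => (d : ℝ))
    rw [h01] at h
    simpa using h
  have hEA : ∀ j : Fin K, Exp P (fun ω => ((A ω j : ℕ) : ℝ))
      = (∑ a ∈ 𝒜, (a j : ℝ) * q 0 a) + ∑ a ∈ 𝒜, (a j : ℝ) * q 1 a := by
    intro j
    have h := hE (fun _ a => (a j : ℝ))
    rw [h01] at h
    exact h
  -- Pr of marginal events
  have hPrD1 : Pr P (evD D 1) = ∑ a ∈ 𝒜, q 1 a := by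
    have hmeas : MeasurableSet (evD D 1) := hD (MeasurableSet.singleton 1)
    have h := pr_eq_exp P (evD D 1) hmeas
    have hind : (fun ω => (evD D 1).indicator (fun _ => (1:ℝ)) ω)
        = fun ω => (fun d (_ : Fin K → ℕ) => if d = 1 then (1:ℝ) else 0) (D ω) (A ω) := by
      funext ω
      by_cases hω : D ω = 1
      · rw [Set.indicator_of_mem (show ω ∈ evD D 1 from hω)]
        simp [hω]
      · rw [Set.indicator_of_notMem (show ω ∉ evD D 1 from hω)]
        simp [hω]
    rw [h, hind, hE (fun d _ => if d = 1 then (1:ℝ) else 0), h01]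
    norm_num
  have hPrD0 : Pr P (evD D 0) = 1 - ∑ a ∈ 𝒜, q 1 a := by
    have hmeas : MeasurableSet (evD D 0) := hD (MeasurableSet.singleton 0)
    have h := pr_eq_exp P (evD D 0) hmeas
    have hind : (fun ω => (evD D 0).indicator (fun _ => (1:ℝ)) ω)
        = fun ω => (fun d (_ : Fin K → ℕ) => if d = 0 then (1:ℝ) else 0) (D ω) (A ω) := by
      funext ω
      by_cases hω : D ω = 0
      · rw [Set.indicator_of_mem (show ω ∈ evD D 0 from hω)]
        simp [hω]
      · rw [Set.indicator_of_notMem (show ω ∉ evD D 0 from hω)]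
        simp [hω]
    rw [h, hind, hE (fun d _ => if d = 0 then (1:ℝ) else 0), h01]
    norm_num
    linarith
  have hPrA : ∀ a₀ ∈ 𝒜, Pr P (evA A a₀) = q 0 a₀ + q 1 a₀ := by
    intro a₀ ha₀
    have hmeas : MeasurableSet (evA A a₀) := hA (MeasurableSet.singleton a₀)
    have h := pr_eq_exp P (evA A a₀) hmeas
    have hind : (fun ω => (evA A a₀).indicator (fun _ => (1:ℝ)) ω)
        = fun ω => (fun (_ : ℕ) (a : Fin K → ℕ) => if a = a₀ then (1:ℝ) else 0) (D ω) (A ω) := by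
      funext ω
      by_cases hω : A ω = a₀
      · rw [Set.indicator_of_mem (show ω ∈ evA A a₀ from hω)]
        simp [hω]
      · rw [Set.indicator_of_notMem (show ω ∉ evA A a₀ from hω)]
        simp [hω]
    rw [h, hind, hE (fun _ a => if a = a₀ then (1:ℝ) else 0), h01]
    simp [Finset.sum_ite_eq', ha₀]
  have hcondA1 : ∀ j : Fin K, condA1 P D A j
      = (∑ a ∈ 𝒜, (a j : ℝ) * q 1 a) / ∑ a ∈ 𝒜, q 1 a := by
    intro j
    unfold condA1 CE
    rw [hPrD1]
    congr 1
    have hind : (fun ω => ((A ω j : ℕ) : ℝ) * (evD D 1).indicator (fun _ => (1:ℝ)) ω)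
        = fun ω => (fun d (a : Fin K → ℕ) => (a j : ℝ) * if d = 1 then (1:ℝ) else 0) (D ω) (A ω) := by
      funext ω
      by_cases hω : D ω = 1
      · rw [Set.indicator_of_mem (show ω ∈ evD D 1 from hω)]
        simp [hω]
      · rw [Set.indicator_of_notMem (show ω ∉ evD D 1 from hω)]
        simp [hω]
    rw [hind, hE (fun d a => (a j : ℝ) * if d = 1 then (1:ℝ) else 0), h01]
    norm_num
  -- covariance entries in cell form
  have hCovE : ∀ zg wg : ℕ → (Fin K → ℕ) → ℝ,
      Cov P (fun ω => zg (D ω) (A ω)) (fun ω => wg (D ω) (A ω))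
        = (∑ d ∈ ({0,1} : Finset ℕ), ∑ a ∈ 𝒜, zg d a * wg d a * q d a)
          - (∑ d ∈ ({0,1} : Finset ℕ), ∑ a ∈ 𝒜, zg d a * q d a)
            * (∑ d ∈ ({0,1} : Finset ℕ), ∑ a ∈ 𝒜, wg d a * q d a) := by
    intro zg wg
    have h1 := hE (fun d a => zg d a * wg d a)
    have h2 := hE zg
    have h3 := hE wg
    show Exp P (fun ω => zg (D ω) (A ω) * wg (D ω) (A ω))
        - Exp P (fun ω => zg (D ω) (A ω)) * Exp P (fun ω => wg (D ω) (A ω)) = _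
    rw [h1, h2, h3]
  have hvarD : varD P D = (∑ a ∈ 𝒜, q 1 a) - (∑ a ∈ 𝒜, q 1 a) * (∑ a ∈ 𝒜, q 1 a) := by
    have h := hCovE (fun d _ => (d : ℝ)) (fun d _ => (d : ℝ))
    simp only [h01] at h
    simp only [Nat.cast_zero, Nat.cast_one, zero_mul, one_mul, mul_zero, mul_one,
      Finset.sum_const_zero, zero_add] at h
    exact h
  have hcovDWl : ∀ j : Fin K, covDW P D A (Sum.inl j)
      = (∑ a ∈ 𝒜, (a j : ℝ) * q 1 a)
        - (∑ a ∈ 𝒜, q 1 a) * ((∑ a ∈ 𝒜, (a j : ℝ) * q 0 a) + ∑ a ∈ 𝒜, (a j : ℝ) * q 1 a) := by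
    intro j
    have h := hCovE (fun d _ => (d : ℝ)) (fun _ a => (a j : ℝ))
    simp only [h01] at h
    simp only [Nat.cast_zero, Nat.cast_one, zero_mul, one_mul, mul_zero, mul_one,
      Finset.sum_const_zero, zero_add] at h
    exact h
  have hcovDWr : ∀ j : Fin K, covDW P D A (Sum.inr j)
      = (∑ a ∈ 𝒜, (a j : ℝ) * q 1 a)
        - (∑ a ∈ 𝒜, q 1 a) * (∑ a ∈ 𝒜, (a j : ℝ) * q 1 a) := by
    intro j
    have h := hCovE (fun d _ => (d : ℝ)) (fun d a => (a j : ℝ) * (d : ℝ))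
    simp only [h01] at h
    simp only [Nat.cast_zero, Nat.cast_one, zero_mul, one_mul, mul_zero, mul_one,
      Finset.sum_const_zero, zero_add] at h
    exact h
  have hWll : ∀ i j : Fin K, varWmat P D A (Sum.inl i) (Sum.inl j)
      = ((∑ a ∈ 𝒜, (a i : ℝ) * ((a j : ℝ) * q 0 a)) + ∑ a ∈ 𝒜, (a i : ℝ) * ((a j : ℝ) * q 1 a))
        - ((∑ a ∈ 𝒜, (a i : ℝ) * q 0 a) + ∑ a ∈ 𝒜, (a i : ℝ) * q 1 a)
          * ((∑ a ∈ 𝒜, (a j : ℝ) * q 0 a) + ∑ a ∈ 𝒜, (a j : ℝ) * q 1 a) := by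
    intro i j
    have h := hCovE (fun _ a => (a i : ℝ)) (fun _ a => (a j : ℝ))
    simp only [h01] at h
    simp only [mul_assoc] at h
    exact h
  have hWlr : ∀ i j : Fin K, varWmat P D A (Sum.inl i) (Sum.inr j)
      = (∑ a ∈ 𝒜, (a i : ℝ) * ((a j : ℝ) * q 1 a))
        - ((∑ a ∈ 𝒜, (a i : ℝ) * q 0 a) + ∑ a ∈ 𝒜, (a i : ℝ) * q 1 a)
          * (∑ a ∈ 𝒜, (a j : ℝ) * q 1 a) := by
    intro i j
    have h := hCovE (fun _ a => (a i : ℝ)) (fun d a => (a j : ℝ) * (d : ℝ))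
    simp only [h01] at h
    simp only [Nat.cast_zero, Nat.cast_one, zero_mul, one_mul, mul_zero, mul_one,
      Finset.sum_const_zero, zero_add, mul_assoc] at h
    exact h
  have hWrl : ∀ i j : Fin K, varWmat P D A (Sum.inr i) (Sum.inl j)
      = (∑ a ∈ 𝒜, (a i : ℝ) * ((a j : ℝ) * q 1 a))
        - (∑ a ∈ 𝒜, (a i : ℝ) * q 1 a)
          * ((∑ a ∈ 𝒜, (a j : ℝ) * q 0 a) + ∑ a ∈ 𝒜, (a j : ℝ) * q 1 a) := by
    intro i j
    have h := hCovE (fun d a => (a i : ℝ) * (d : ℝ)) (fun _ a => (a j : ℝ))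
    simp only [h01] at h
    simp only [Nat.cast_zero, Nat.cast_one, zero_mul, one_mul, mul_zero, mul_one,
      Finset.sum_const_zero, zero_add, mul_assoc] at h
    exact h
  have hWrr : ∀ i j : Fin K, varWmat P D A (Sum.inr i) (Sum.inr j)
      = (∑ a ∈ 𝒜, (a i : ℝ) * ((a j : ℝ) * q 1 a))
        - (∑ a ∈ 𝒜, (a i : ℝ) * q 1 a) * (∑ a ∈ 𝒜, (a j : ℝ) * q 1 a) := by
    intro i j
    have h := hCovE (fun d a => (a i : ℝ) * (d : ℝ)) (fun d a => (a j : ℝ) * (d : ℝ))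
    simp only [h01] at h
    simp only [Nat.cast_zero, Nat.cast_one, zero_mul, one_mul, mul_zero, mul_one,
      Finset.sum_const_zero, zero_add, mul_assoc] at h
    exact h
  -- matrix facts
  have hWherm : (varWmat P D A).IsHermitian := by
    unfold Matrix.IsHermitian
    ext u v
    simp only [Matrix.conjTranspose_apply, varWmat, Matrix.of_apply, star_trivial]
    exact cov_comm P _ _
  have hWpd : (varWmat P D A).PosDef := by
    refine Matrix.PosDef.of_dotProduct_mulVec_pos hWherm fun x hx => ?_
    have hx' : (Sum.elim (fun _ : Unit => (0:ℝ)) x : Unit ⊕ (Fin K ⊕ Fin K) → ℝ) ≠ 0 := by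
      intro h
      apply hx
      funext v
      have := congrFun h (Sum.inr v)
      simpa using this
    have hpd := hPD.dotProduct_mulVec_pos hx'
    simp only [dotProduct, Matrix.mulVec, Fintype.sum_sum_type, Sum.elim_inl,
      Sum.elim_inr, Pi.star_apply, star_trivial, covDADmat, varWmat, DADvec,
      Matrix.of_apply, zero_mul, mul_zero, Finset.sum_const_zero, add_zero, zero_add,
      Finset.univ_unique, Finset.sum_singleton] at hpd ⊢
    convert hpd using 1
  have hdetW : IsUnit (varWmat P D A).det := isUnit_iff_ne_zero.mpr hWpd.det_pos.ne'
  have hMvarW : ∀ w, (∑ v, Minter P D A v * varWmat P D A v w) = covDW P D A w := by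
    intro w
    have hinv : (varWmat P D A)⁻¹ * varWmat P D A = 1 := Matrix.nonsing_inv_mul _ hdetW
    have h1 : ∀ v, Minter P D A v * varWmat P D A v w
        = ∑ u, covDW P D A u * (varWmat P D A)⁻¹ u v * varWmat P D A v w := by
      intro v
      rw [Minter, Finset.sum_mul]
    calc ∑ v, Minter P D A v * varWmat P D A v w
        = ∑ v, ∑ u, covDW P D A u * (varWmat P D A)⁻¹ u v * varWmat P D A v w :=
          Finset.sum_congr rfl fun v _ => h1 v
      _ = ∑ u, covDW P D A u * ((varWmat P D A)⁻¹ * varWmat P D A) u w := by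
          rw [Finset.sum_comm]
          refine Finset.sum_congr rfl fun u _ => ?_
          rw [Matrix.mul_apply, Finset.mul_sum]
          exact Finset.sum_congr rfl fun v _ => by ring
      _ = covDW P D A w := by
          rw [hinv]
          simp [Matrix.one_apply]
  have hdenpos : 0 < denomI P D A := by
    have hy : (Sum.elim (fun _ : Unit => (1:ℝ)) (fun v => - Minter P D A v) :
        Unit ⊕ (Fin K ⊕ Fin K) → ℝ) ≠ 0 := by
      intro h
      have := congrFun h (Sum.inl ())
      simp at this
    have hpd := hPD.dotProduct_mulVec_pos hy
    simp only [dotProduct, Matrix.mulVec, Fintype.sum_sum_type, Sum.elim_inl,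
      Sum.elim_inr, Pi.star_apply, star_trivial, covDADmat, DADvec,
      Matrix.of_apply, Finset.univ_unique, Finset.sum_singleton, one_mul, mul_one] at hpd
    have hcovDD : Cov P (fun ω => ((D ω : ℕ):ℝ)) (fun ω => ((D ω : ℕ):ℝ)) = varD P D := rfl
    have hcovl : ∀ v, Cov P (fun ω => ((D ω : ℕ):ℝ)) (Wvec D A v) = covDW P D A v :=
      fun _ => rfl
    have hcovl' : ∀ v, Cov P (Wvec D A v) (fun ω => ((D ω : ℕ):ℝ)) = covDW P D A v :=
      fun v => cov_comm P _ _
    have hcovWW : ∀ u v, Cov P (Wvec D A u) (Wvec D A v) = varWmat P D A u v :=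
      fun _ _ => rfl
    simp only [hcovDD, hcovl, hcovl', hcovWW] at hpd
    have hinner : ∀ u : Fin K ⊕ Fin K,
        (∑ x, varWmat P D A u (Sum.inl x) * - Minter P D A (Sum.inl x))
          + ∑ x, varWmat P D A u (Sum.inr x) * - Minter P D A (Sum.inr x)
        = - covDW P D A u := by
      intro u
      have hstep : (∑ x, varWmat P D A u (Sum.inl x) * - Minter P D A (Sum.inl x))
            + ∑ x, varWmat P D A u (Sum.inr x) * - Minter P D A (Sum.inr x)
          = - ((∑ x, Minter P D A (Sum.inl x) * varWmat P D A (Sum.inl x) u)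
            + ∑ x, Minter P D A (Sum.inr x) * varWmat P D A (Sum.inr x) u) := by
        rw [neg_add, ← Finset.sum_neg_distrib, ← Finset.sum_neg_distrib]
        congr 1
        · refine Finset.sum_congr rfl fun x _ => ?_
          rw [show varWmat P D A u (Sum.inl x) = varWmat P D A (Sum.inl x) u from
            cov_comm P _ _]
          ring
        · refine Finset.sum_congr rfl fun x _ => ?_
          rw [show varWmat P D A u (Sum.inr x) = varWmat P D A (Sum.inr x) u from
            cov_comm P _ _]
          ring
      rw [hstep, ← Fintype.sum_sum_type (f := fun v => Minter P D A v * varWmat P D A v u),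
        hMvarW u]
    simp only [hinner] at hpd
    refine lt_of_lt_of_eq hpd ?_
    have e1 : (∑ x, covDW P D A (Sum.inl x) * - Minter P D A (Sum.inl x))
        = - ∑ x, Minter P D A (Sum.inl x) * covDW P D A (Sum.inl x) := by
      rw [← Finset.sum_neg_distrib]
      exact Finset.sum_congr rfl fun x _ => by ring
    have e2 : (∑ x, covDW P D A (Sum.inr x) * - Minter P D A (Sum.inr x))
        = - ∑ x, Minter P D A (Sum.inr x) * covDW P D A (Sum.inr x) := by
      rw [← Finset.sum_neg_distrib]
      exact Finset.sum_congr rfl fun x _ => by ring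
    have e3 : (∑ x, - Minter P D A (Sum.inl x)
        * (covDW P D A (Sum.inl x) + - covDW P D A (Sum.inl x))) = 0 :=
      Finset.sum_eq_zero fun x _ => by ring
    have e4 : (∑ x, - Minter P D A (Sum.inr x)
        * (covDW P D A (Sum.inr x) + - covDW P D A (Sum.inr x))) = 0 :=
      Finset.sum_eq_zero fun x _ => by ring
    rw [e1, e2, e3, e4]
    unfold denomI
    rw [Fintype.sum_sum_type (f := fun v => Minter P D A v * covDW P D A v)]
    ring
  -- flat M identities
  have hMwl : ∀ j : Fin K,
      ((∑ i, Minter P D A (Sum.inl i) * ∑ a ∈ 𝒜, (a i : ℝ) * ((a j : ℝ) * q 0 a))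
        + (∑ i, Minter P D A (Sum.inl i) * ∑ a ∈ 𝒜, (a i : ℝ) * ((a j : ℝ) * q 1 a))
        - ((∑ i, Minter P D A (Sum.inl i) * ∑ a ∈ 𝒜, (a i : ℝ) * q 0 a)
            + ∑ i, Minter P D A (Sum.inl i) * ∑ a ∈ 𝒜, (a i : ℝ) * q 1 a)
          * ((∑ a ∈ 𝒜, (a j : ℝ) * q 0 a) + ∑ a ∈ 𝒜, (a j : ℝ) * q 1 a))
      + ((∑ i, Minter P D A (Sum.inr i) * ∑ a ∈ 𝒜, (a i : ℝ) * ((a j : ℝ) * q 1 a))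
        - (∑ i, Minter P D A (Sum.inr i) * ∑ a ∈ 𝒜, (a i : ℝ) * q 1 a)
          * ((∑ a ∈ 𝒜, (a j : ℝ) * q 0 a) + ∑ a ∈ 𝒜, (a j : ℝ) * q 1 a))
      = (∑ a ∈ 𝒜, (a j : ℝ) * q 1 a)
        - (∑ a ∈ 𝒜, q 1 a) * ((∑ a ∈ 𝒜, (a j : ℝ) * q 0 a) + ∑ a ∈ 𝒜, (a j : ℝ) * q 1 a) := by
    intro j
    have h := hMvarW (Sum.inl j)
    rw [Fintype.sum_sum_type
      (f := fun v => Minter P D A v * varWmat P D A v (Sum.inl j))] at h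
    simp only [hWll, hWrl, hcovDWl] at h
    rw [sum_split3, sum_split2] at h
    exact h
  have hMwr : ∀ j : Fin K,
      ((∑ i, Minter P D A (Sum.inl i) * ∑ a ∈ 𝒜, (a i : ℝ) * ((a j : ℝ) * q 1 a))
        - ((∑ i, Minter P D A (Sum.inl i) * ∑ a ∈ 𝒜, (a i : ℝ) * q 0 a)
            + ∑ i, Minter P D A (Sum.inl i) * ∑ a ∈ 𝒜, (a i : ℝ) * q 1 a)
          * (∑ a ∈ 𝒜, (a j : ℝ) * q 1 a))
      + ((∑ i, Minter P D A (Sum.inr i) * ∑ a ∈ 𝒜, (a i : ℝ) * ((a j : ℝ) * q 1 a))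
        - (∑ i, Minter P D A (Sum.inr i) * ∑ a ∈ 𝒜, (a i : ℝ) * q 1 a)
          * (∑ a ∈ 𝒜, (a j : ℝ) * q 1 a))
      = (∑ a ∈ 𝒜, (a j : ℝ) * q 1 a)
        - (∑ a ∈ 𝒜, q 1 a) * (∑ a ∈ 𝒜, (a j : ℝ) * q 1 a) := by
    intro j
    have h := hMvarW (Sum.inr j)
    rw [Fintype.sum_sum_type
      (f := fun v => Minter P D A v * varWmat P D A v (Sum.inr j))] at h
    simp only [hWlr, hWrr, hcovDWr] at h
    rw [sum_split3b, sum_split2] at h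
    exact h
  -- denom in cell form
  have hdenCell : denomI P D A
      = ((∑ a ∈ 𝒜, q 1 a) - (∑ a ∈ 𝒜, q 1 a) * ∑ a ∈ 𝒜, q 1 a)
        - (((∑ j, Minter P D A (Sum.inl j) * ∑ a ∈ 𝒜, (a j : ℝ) * q 1 a)
            - (∑ a ∈ 𝒜, q 1 a) * ((∑ j, Minter P D A (Sum.inl j) * ∑ a ∈ 𝒜, (a j : ℝ) * q 0 a)
                + ∑ j, Minter P D A (Sum.inl j) * ∑ a ∈ 𝒜, (a j : ℝ) * q 1 a))
          + ((∑ j, Minter P D A (Sum.inr j) * ∑ a ∈ 𝒜, (a j : ℝ) * q 1 a)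
            - (∑ a ∈ 𝒜, q 1 a) * ∑ j, Minter P D A (Sum.inr j) * ∑ a ∈ 𝒜, (a j : ℝ) * q 1 a)) := by
    unfold denomI
    rw [Fintype.sum_sum_type (f := fun v => Minter P D A v * covDW P D A v)]
    simp only [hcovDWl, hcovDWr]
    rw [hvarD]
    congr 1
    congr 1
    · have : ∀ j : Fin K, Minter P D A (Sum.inl j)
          * ((∑ a ∈ 𝒜, (a j : ℝ) * q 1 a)
            - (∑ a ∈ 𝒜, q 1 a) * ((∑ a ∈ 𝒜, (a j : ℝ) * q 0 a) + ∑ a ∈ 𝒜, (a j : ℝ) * q 1 a))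
          = Minter P D A (Sum.inl j) * (∑ a ∈ 𝒜, (a j : ℝ) * q 1 a)
            - (∑ a ∈ 𝒜, q 1 a) * (Minter P D A (Sum.inl j) * (∑ a ∈ 𝒜, (a j : ℝ) * q 0 a)
              + Minter P D A (Sum.inl j) * ∑ a ∈ 𝒜, (a j : ℝ) * q 1 a) := fun j => by ring
      rw [Finset.sum_congr rfl fun j _ => this j, Finset.sum_sub_distrib, ← Finset.mul_sum,
        Finset.sum_add_distrib]
    · rw [sum_split_c2]
  -- the epsilon function
  set Eps : ℕ → (Fin K → ℕ) → ℝ := fun d a =>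
    (d : ℝ) - (∑ a' ∈ 𝒜, q 1 a')
    - (∑ j, Minter P D A (Sum.inl j) * ((a j : ℝ)
        - ((∑ a' ∈ 𝒜, (a' j : ℝ) * q 0 a') + ∑ a' ∈ 𝒜, (a' j : ℝ) * q 1 a')))
    - (∑ j, Minter P D A (Sum.inr j) * ((a j : ℝ) * (d : ℝ) - ∑ a' ∈ 𝒜, (a' j : ℝ) * q 1 a'))
    with hEps_def
  have hEps0 : ∀ a : Fin K → ℕ, Eps 0 a
      = (-(∑ a' ∈ 𝒜, q 1 a')
          + (∑ j, Minter P D A (Sum.inl j) * ∑ a' ∈ 𝒜, (a' j : ℝ) * q 0 a')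
          + (∑ j, Minter P D A (Sum.inl j) * ∑ a' ∈ 𝒜, (a' j : ℝ) * q 1 a')
          + (∑ j, Minter P D A (Sum.inr j) * ∑ a' ∈ 𝒜, (a' j : ℝ) * q 1 a'))
        - ∑ j, Minter P D A (Sum.inl j) * (a j : ℝ) := by
    intro a
    simp only [hEps_def, Nat.cast_zero, mul_zero, zero_sub, mul_neg, Finset.sum_neg_distrib,
      sub_neg_eq_add]
    rw [sum_split_aff]
    ring
  have hEps1 : ∀ a : Fin K → ℕ, Eps 1 a
      = ((-(∑ a' ∈ 𝒜, q 1 a')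
          + (∑ j, Minter P D A (Sum.inl j) * ∑ a' ∈ 𝒜, (a' j : ℝ) * q 0 a')
          + (∑ j, Minter P D A (Sum.inl j) * ∑ a' ∈ 𝒜, (a' j : ℝ) * q 1 a')
          + (∑ j, Minter P D A (Sum.inr j) * ∑ a' ∈ 𝒜, (a' j : ℝ) * q 1 a')) + 1)
        - ∑ j, (Minter P D A (Sum.inl j) + Minter P D A (Sum.inr j)) * (a j : ℝ) := by
    intro a
    simp only [hEps_def, Nat.cast_one, mul_one]
    rw [sum_split_aff, sum_split_sub, sum_add_mul']
    ring
  -- J identities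
  have hJ1 : ∑ a ∈ 𝒜, Eps 1 a * q 1 a = denomI P D A := by
    rw [Finset.sum_congr rfl fun a (_ : a ∈ 𝒜) => by rw [hEps1 a], sum_affine, sum_add_mul',
      hdenCell]
    ring
  have hJ0 : ∑ a ∈ 𝒜, Eps 0 a * q 0 a = - denomI P D A := by
    rw [Finset.sum_congr rfl fun a (_ : a ∈ 𝒜) => by rw [hEps0 a], sum_affine, hdenCell,
      hp0eq]
    ring
  have hJr : ∀ j : Fin K, ∑ a ∈ 𝒜, (a j : ℝ) * (Eps 1 a * q 1 a) = 0 := by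
    intro j
    rw [Finset.sum_congr rfl fun a (_ : a ∈ 𝒜) => by rw [hEps1 a], sum_affine2, sum_add_mul']
    linear_combination (-1 : ℝ) * hMwr j
  have hJl0 : ∀ j : Fin K, ∑ a ∈ 𝒜, (a j : ℝ) * (Eps 0 a * q 0 a) = 0 := by
    intro j
    rw [Finset.sum_congr rfl fun a (_ : a ∈ 𝒜) => by rw [hEps0 a], sum_affine2]
    linear_combination (hMwr j) - (hMwl j)
  -- orthogonality translation
  set hfun : ℕ → (Fin K → ℕ) → ℝ := fun d a =>
    Δinter * (d : ℝ) + θ₀ + (∑ j, θ j * (a j : ℝ)) + ∑ j, lam j * (a j : ℝ) * (d : ℝ)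
    with hhfun_def
  set cY : ℕ → (Fin K → ℕ) → ℝ := fun d a =>
    Exp P (fun ω => Ypot d a ω * (if D ω = d ∧ A ω = a then (1:ℝ) else 0)) with hcY_def
  have hRes : ∀ g : ℕ → (Fin K → ℕ) → ℝ,
      Exp P (fun ω => residInter D A 𝒜 Ypot Δinter θ₀ θ lam ω * g (D ω) (A ω))
        = ((∑ a ∈ 𝒜, g 0 a * cY 0 a) + ∑ a ∈ 𝒜, g 1 a * cY 1 a)
          - ((∑ a ∈ 𝒜, hfun 0 a * g 0 a * q 0 a) + ∑ a ∈ 𝒜, hfun 1 a * g 1 a * q 1 a) := by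
    intro g
    have hsplit : (fun ω => residInter D A 𝒜 Ypot Δinter θ₀ θ lam ω * g (D ω) (A ω))
        = fun ω => Yobs D A 𝒜 Ypot ω * g (D ω) (A ω)
            - hfun (D ω) (A ω) * g (D ω) (A ω) := by
      funext ω
      simp only [residInter, hhfun_def]
      ring
    have h1 : Exp P (fun ω => residInter D A 𝒜 Ypot Δinter θ₀ θ lam ω * g (D ω) (A ω))
        = Exp P (fun ω => Yobs D A 𝒜 Ypot ω * g (D ω) (A ω))
          - Exp P (fun ω => hfun (D ω) (A ω) * g (D ω) (A ω)) := by
      unfold Exp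
      rw [hsplit]
      exact MeasureTheory.integral_sub (integrable_yobs_mul P D A 𝒜 Ypot hD hA hInt g)
        (integrable_fun_cells P D A 𝒜 hD hA hDbin hAsupp (fun d a => hfun d a * g d a))
    rw [h1, exp_yobs_cells P D A 𝒜 Ypot hD hA hInt g,
      hE (fun d a => hfun d a * g d a), h01, h01]
  have hO1' : Exp P (fun ω => residInter D A 𝒜 Ypot Δinter θ₀ θ lam ω * (1:ℝ)) = 0 := by
    simpa using hO1
  have e1 := (hRes (fun _ _ => (1:ℝ))).symm.trans hO1'
  have e2 := (hRes (fun d _ => (d : ℝ))).symm.trans hO2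
  have e3 : ∀ j : Fin K, _ := fun j => (hRes (fun _ a => (a j : ℝ))).symm.trans (hO3 j)
  have hO4' : ∀ j : Fin K, Exp P (fun ω =>
      residInter D A 𝒜 Ypot Δinter θ₀ θ lam ω * ((A ω j : ℝ) * (D ω : ℝ))) = 0 := by
    intro j
    rw [show (fun ω => residInter D A 𝒜 Ypot Δinter θ₀ θ lam ω * ((A ω j : ℝ) * (D ω : ℝ)))
      = fun ω => residInter D A 𝒜 Ypot Δinter θ₀ θ lam ω * (A ω j : ℝ) * (D ω : ℝ) from
      funext fun ω => by ring]
    exact hO4 j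
  have e4 : ∀ j : Fin K, _ := fun j => (hRes (fun d a => (a j : ℝ) * (d : ℝ))).symm.trans (hO4' j)
  simp only [Nat.cast_zero, Nat.cast_one, zero_mul, mul_zero, one_mul, mul_one,
    Finset.sum_const_zero, zero_add, add_zero, zero_sub, sub_zero] at e1 e2 e3 e4
  -- residual sums
  have hr1 : ∑ a ∈ 𝒜, (cY 1 a - hfun 1 a * q 1 a) = 0 := by
    rw [Finset.sum_sub_distrib]
    linarith [e2]
  have hr0 : ∑ a ∈ 𝒜, (cY 0 a - hfun 0 a * q 0 a) = 0 := by
    rw [Finset.sum_sub_distrib]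
    linarith [e1, e2]
  have hr1j : ∀ j : Fin K, ∑ a ∈ 𝒜, (a j : ℝ) * (cY 1 a - hfun 1 a * q 1 a) = 0 := by
    intro j
    have hs : ∑ a ∈ 𝒜, (a j : ℝ) * (cY 1 a - hfun 1 a * q 1 a)
        = (∑ a ∈ 𝒜, (a j : ℝ) * cY 1 a) - ∑ a ∈ 𝒜, hfun 1 a * (a j : ℝ) * q 1 a := by
      rw [← Finset.sum_sub_distrib]
      exact Finset.sum_congr rfl fun a _ => by ring
    rw [hs]
    linarith [e4 j]
  have hr0j : ∀ j : Fin K, ∑ a ∈ 𝒜, (a j : ℝ) * (cY 0 a - hfun 0 a * q 0 a) = 0 := by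
    intro j
    have hs : ∑ a ∈ 𝒜, (a j : ℝ) * (cY 0 a - hfun 0 a * q 0 a)
        = (∑ a ∈ 𝒜, (a j : ℝ) * cY 0 a) - ∑ a ∈ 𝒜, hfun 0 a * (a j : ℝ) * q 0 a := by
      rw [← Finset.sum_sub_distrib]
      exact Finset.sum_congr rfl fun a _ => by ring
    rw [hs]
    linarith [e3 j, e4 j]
  -- affine form of hfun
  have hH0 : ∀ a : Fin K → ℕ, hfun 0 a = θ₀ + ∑ j, θ j * (a j : ℝ) := by
    intro a
    simp only [hhfun_def, Nat.cast_zero, mul_zero, zero_mul, add_zero, zero_add,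
      Finset.sum_const_zero]
  have hH1 : ∀ a : Fin K → ℕ, hfun 1 a = (Δinter + θ₀) + ∑ j, (θ j + lam j) * (a j : ℝ) := by
    intro a
    simp only [hhfun_def, Nat.cast_one, mul_one]
    rw [sum_add_mul']
    ring
  -- key identity
  have key1 : (∑ a ∈ 𝒜, Eps 0 a * cY 0 a) + ∑ a ∈ 𝒜, Eps 1 a * cY 1 a
      = Δinter * denomI P D A := by
    have hsplit0 : ∑ a ∈ 𝒜, Eps 0 a * cY 0 a
        = (∑ a ∈ 𝒜, Eps 0 a * (cY 0 a - hfun 0 a * q 0 a))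
          + ∑ a ∈ 𝒜, hfun 0 a * (Eps 0 a * q 0 a) := by
      rw [← Finset.sum_add_distrib]
      exact Finset.sum_congr rfl fun a _ => by ring
    have hsplit1 : ∑ a ∈ 𝒜, Eps 1 a * cY 1 a
        = (∑ a ∈ 𝒜, Eps 1 a * (cY 1 a - hfun 1 a * q 1 a))
          + ∑ a ∈ 𝒜, hfun 1 a * (Eps 1 a * q 1 a) := by
      rw [← Finset.sum_add_distrib]
      exact Finset.sum_congr rfl fun a _ => by ring
    have hA0 : ∑ a ∈ 𝒜, Eps 0 a * (cY 0 a - hfun 0 a * q 0 a) = 0 := by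
      rw [Finset.sum_congr rfl fun a (_ : a ∈ 𝒜) => by rw [hEps0 a], sum_affine, hr0]
      simp only [hr0j, mul_zero, Finset.sum_const_zero, sub_zero]
    have hA1 : ∑ a ∈ 𝒜, Eps 1 a * (cY 1 a - hfun 1 a * q 1 a) = 0 := by
      rw [Finset.sum_congr rfl fun a (_ : a ∈ 𝒜) => by rw [hEps1 a], sum_affine, hr1]
      simp only [hr1j, mul_zero, Finset.sum_const_zero, sub_zero]
    have hB0 : ∑ a ∈ 𝒜, hfun 0 a * (Eps 0 a * q 0 a) = - (θ₀ * denomI P D A) := by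
      rw [Finset.sum_congr rfl fun a (_ : a ∈ 𝒜) => by rw [hH0 a], sum_affine_add, hJ0]
      simp only [hJl0, mul_zero, Finset.sum_const_zero, add_zero]
      ring
    have hB1 : ∑ a ∈ 𝒜, hfun 1 a * (Eps 1 a * q 1 a)
        = (Δinter + θ₀) * denomI P D A := by
      rw [Finset.sum_congr rfl fun a (_ : a ∈ 𝒜) => by rw [hH1 a], sum_affine_add, hJ1]
      simp only [hJr, mul_zero, Finset.sum_const_zero, add_zero]
    rw [hsplit0, hsplit1, hA0, hA1, hB0, hB1]
    ring
  have hdenne : denomI P D A ≠ 0 := ne_of_gt hdenpos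
  have h1mp1 : (1:ℝ) - ∑ a ∈ 𝒜, q 1 a ≠ 0 := by
    rw [← hp0eq]
    exact hp0ne
  -- weight identities
  have hW1 : ∀ a ∈ 𝒜, wdceI P D A a = q 1 a * Eps 1 a / denomI P D A := by
    intro a ha
    unfold wdceI piP
    rw [hPrDA, hPrD1, hvarD]
    simp only [hEA, hcondA1]
    have hcanc : ∀ j : Fin K, (∑ a' ∈ 𝒜, q 1 a')
        * ((∑ a' ∈ 𝒜, (a' j : ℝ) * q 1 a') / ∑ a' ∈ 𝒜, q 1 a')
        = ∑ a' ∈ 𝒜, (a' j : ℝ) * q 1 a' := fun j => by field_simp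
    simp only [hcanc]
    rw [hEps1 a, sum_split_aff, sum_split_sub, sum_add_mul']
    field_simp
    ring
  have hW0 : ∀ a ∈ 𝒜, windI P D A a
      = (q 1 a * Eps 1 a + q 0 a * Eps 0 a) / denomI P D A := by
    intro a ha
    unfold windI piP
    rw [hPrDA, hPrDA, hPrD1, hPrD0, hPrA a ha, hvarD]
    simp only [hEA, hcondA1]
    have t3 : ∀ j : Fin K, Minter P D A (Sum.inr j)
        * (q 1 a / (∑ a' ∈ 𝒜, q 1 a') * (a j : ℝ)
          - (q 0 a + q 1 a) * ((∑ a' ∈ 𝒜, (a' j : ℝ) * q 1 a') / ∑ a' ∈ 𝒜, q 1 a'))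
        = (1 / ∑ a' ∈ 𝒜, q 1 a')
          * (q 1 a * (Minter P D A (Sum.inr j) * (a j : ℝ))
            - (q 0 a + q 1 a) * (Minter P D A (Sum.inr j) * ∑ a' ∈ 𝒜, (a' j : ℝ) * q 1 a')) := by
      intro j
      field_simp
    simp only [t3]
    rw [← Finset.mul_sum]
    have t4 : (∑ j, (q 1 a * (Minter P D A (Sum.inr j) * (a j : ℝ))
          - (q 0 a + q 1 a) * (Minter P D A (Sum.inr j) * ∑ a' ∈ 𝒜, (a' j : ℝ) * q 1 a')))
        = q 1 a * (∑ j, Minter P D A (Sum.inr j) * (a j : ℝ))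
          - (q 0 a + q 1 a) * ∑ j, Minter P D A (Sum.inr j) * ∑ a' ∈ 𝒜, (a' j : ℝ) * q 1 a' := by
      rw [Finset.sum_sub_distrib, ← Finset.mul_sum, ← Finset.mul_sum]
    rw [t4]
    have t2 : ∀ j : Fin K, Minter P D A (Sum.inl j) * (q 0 a + q 1 a)
        * ((a j : ℝ) - ((∑ a' ∈ 𝒜, (a' j : ℝ) * q 0 a') + ∑ a' ∈ 𝒜, (a' j : ℝ) * q 1 a'))
        = (q 0 a + q 1 a) * (Minter P D A (Sum.inl j)
          * ((a j : ℝ) - ((∑ a' ∈ 𝒜, (a' j : ℝ) * q 0 a') + ∑ a' ∈ 𝒜, (a' j : ℝ) * q 1 a'))) :=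
      fun j => by ring
    simp only [t2]
    rw [← Finset.mul_sum, sum_split_aff, hEps1 a, hEps0 a, sum_add_mul']
    field_simp
    ring
  -- CE rewrites
  have hindIte : ∀ (d : ℕ) (a : Fin K → ℕ) (ω : Ω),
      (evDA D A d a).indicator (fun _ => (1:ℝ)) ω
        = if D ω = d ∧ A ω = a then (1:ℝ) else 0 := by
    intro d a ω
    by_cases hc : D ω = d ∧ A ω = a
    · rw [Set.indicator_of_mem (show ω ∈ evDA D A d a from hc), if_pos hc]
    · rw [Set.indicator_of_notMem (show ω ∉ evDA D A d a from hc), if_neg hc]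
  have hIntInd : ∀ (d' : ℕ) (a' : Fin K → ℕ), d' ∈ ({0,1} : Finset ℕ) → a' ∈ 𝒜 →
      ∀ (d : ℕ) (a : Fin K → ℕ), MeasureTheory.Integrable
        (fun ω => Ypot d' a' ω * (if D ω = d ∧ A ω = a then (1:ℝ) else 0)) P := by
    intro d' a' hd' ha' d a
    rw [mul_ite_eq_indicator D A (Ypot d' a') d a]
    exact (hInt d' hd' a' ha').indicator (measurableSet_evDA D A hD hA d a)
  have hCEce : ∀ (d' : ℕ) (a' : Fin K → ℕ) (d : ℕ) (a : Fin K → ℕ),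
      CE P (Ypot d' a') (evDA D A d a)
        = Exp P (fun ω => Ypot d' a' ω * (if D ω = d ∧ A ω = a then (1:ℝ) else 0)) / q d a := by
    intro d' a' d a
    unfold CE
    rw [hPrDA]
    congr 1
    exact congrArg (Exp P) (funext fun ω => by rw [hindIte])
  have hCE0a : ∀ a : Fin K → ℕ, CE P (Ypot 0 a) (evDA D A 0 a) = cY 0 a / q 0 a :=
    fun a => hCEce 0 a 0 a
  have hCE00 : CE P (Ypot 0 0) (evDA D A 0 0) = cY 0 0 / q 0 0 := hCEce 0 0 0 0
  have hCEdiff : ∀ a ∈ 𝒜, CE P (fun ω => Ypot 1 a ω - Ypot 0 a ω) (evDA D A 1 a)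
      = (cY 1 a - Exp P (fun ω => Ypot 0 a ω * (if D ω = 1 ∧ A ω = a then (1:ℝ) else 0)))
        / q 1 a := by
    intro a ha
    unfold CE
    rw [hPrDA]
    congr 1
    have h1 : Exp P (fun ω => (Ypot 1 a ω - Ypot 0 a ω)
        * (evDA D A 1 a).indicator (fun _ => (1:ℝ)) ω)
        = Exp P (fun ω => Ypot 1 a ω * (if D ω = 1 ∧ A ω = a then (1:ℝ) else 0)
            - Ypot 0 a ω * (if D ω = 1 ∧ A ω = a then (1:ℝ) else 0)) :=
      congrArg (Exp P) (funext fun ω => by rw [hindIte]; ring)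
    rw [h1]
    exact MeasureTheory.integral_sub (hIntInd 1 a (by norm_num) ha 1 a)
      (hIntInd 0 a (by norm_num) ha 1 a)
  clear_value q Eps hfun cY
  -- sum of ω_ind weights vanishes
  have hWindSum : ∑ a ∈ 𝒜, windI P D A a = 0 := by
    rw [Finset.sum_congr rfl hW0, ← Finset.sum_div, Finset.sum_add_distrib,
      show (∑ a ∈ 𝒜, q 1 a * Eps 1 a) = ∑ a ∈ 𝒜, Eps 1 a * q 1 a from
        Finset.sum_congr rfl fun a _ => mul_comm _ _,
      show (∑ a ∈ 𝒜, q 0 a * Eps 0 a) = ∑ a ∈ 𝒜, Eps 0 a * q 0 a from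
        Finset.sum_congr rfl fun a _ => mul_comm _ _,
      hJ1, hJ0]
    simp
  -- per-cell assembly
  have hper : ∀ a ∈ 𝒜,
      wdceI P D A a * CE P (fun ω => Ypot 1 a ω - Ypot 0 a ω) (evDA D A 1 a)
      + windI P D A a * (CE P (Ypot 0 a) (evDA D A 0 a) - CE P (Ypot 0 0) (evDA D A 0 0))
      + wdceI P D A a * (CE P (Ypot 0 a) (evDA D A 1 a) - CE P (Ypot 0 a) (evDA D A 0 a))
      = Eps 1 a * cY 1 a / denomI P D A + Eps 0 a * cY 0 a / denomI P D A
        - windI P D A a * (cY 0 0 / q 0 0) := by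
    intro a ha
    rw [hCEdiff a ha, hCE0a a, hCE00, hCEce 0 a 1 a]
    exact assemble _ _ _ _ _ _ _ _ _ _ _ _ (hq1ne a ha) (hq0ne a ha) (hq0ne 0 h𝒜0) hdenne
      (hW1 a ha) (hW0 a ha)
  calc Δinter = Δinter * denomI P D A / denomI P D A := by
        rw [mul_div_cancel_right₀ _ hdenne]
    _ = ((∑ a ∈ 𝒜, Eps 1 a * cY 1 a) + ∑ a ∈ 𝒜, Eps 0 a * cY 0 a) / denomI P D A := by
        rw [← key1]
        ring_nf
    _ = (∑ a ∈ 𝒜, Eps 1 a * cY 1 a) / denomI P D A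
          + (∑ a ∈ 𝒜, Eps 0 a * cY 0 a) / denomI P D A := by
        rw [add_div]
    _ = (∑ a ∈ 𝒜, Eps 1 a * cY 1 a / denomI P D A)
          + ∑ a ∈ 𝒜, Eps 0 a * cY 0 a / denomI P D A := by
        rw [Finset.sum_div, Finset.sum_div]
    _ = ∑ a ∈ 𝒜, (Eps 1 a * cY 1 a / denomI P D A + Eps 0 a * cY 0 a / denomI P D A
          - windI P D A a * (cY 0 0 / q 0 0)) := by
        rw [Finset.sum_sub_distrib, Finset.sum_add_distrib, ← Finset.sum_mul, hWindSum,
          zero_mul, sub_zero]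
    _ = ∑ a ∈ 𝒜, (wdceI P D A a * CE P (fun ω => Ypot 1 a ω - Ypot 0 a ω) (evDA D A 1 a)
          + windI P D A a * (CE P (Ypot 0 a) (evDA D A 0 a) - CE P (Ypot 0 0) (evDA D A 0 0))
          + wdceI P D A a * (CE P (Ypot 0 a) (evDA D A 1 a) - CE P (Ypot 0 a) (evDA D A 0 a))) :=
        (Finset.sum_congr rfl hper).symm
    _ = (∑ a ∈ 𝒜, wdceI P D A a * CE P (fun ω => Ypot 1 a ω - Ypot 0 a ω) (evDA D A 1 a))
        + (∑ a ∈ 𝒜, windI P D A a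
            * (CE P (Ypot 0 a) (evDA D A 0 a) - CE P (Ypot 0 0) (evDA D A 0 0)))
        + ∑ a ∈ 𝒜, wdceI P D A a
            * (CE P (Ypot 0 a) (evDA D A 1 a) - CE P (Ypot 0 a) (evDA D A 0 a)) := by
        rw [Finset.sum_add_distrib, Finset.sum_add_distrib]
end
end

section
/- (Interaction-regression weight identities.) Assume positivity and that the covariance matrix of (D,A,AD) is positive definite. Then the interaction-regression weights satisfy Σ_{a∈𝒜} ω_dce^i(a) = 1, Σ_{a∈𝒜} ω_ind^i(a) = 0, and Σ_{a∈𝒜} a_u·ω_ind^i(a) = 0 for every coordinate u = 1,…,K. -/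
open MeasureTheory ProbabilityTheory BigOperators

noncomputable section

variable {Ω : Type} [MeasurableSpace Ω] {K : ℕ}

lemma Exp_eq_sum (P : Measure Ω) [IsProbabilityMeasure P]
    (D : Ω → ℕ) (A : Ω → Fin K → ℕ) (𝒜 : Finset (Fin K → ℕ))
    (hD : Measurable D) (hA : Measurable A)
    (hDbin : ∀ ω, D ω = 0 ∨ D ω = 1) (hAsupp : ∀ ω, A ω ∈ 𝒜)
    (g : Ω → ℝ) (f : ℕ → (Fin K → ℕ) → ℝ) (hfg : ∀ ω, g ω = f (D ω) (A ω)) :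
    Exp P g = ∑ d ∈ ({0,1} : Finset ℕ), ∑ a ∈ 𝒜, f d a * Pr P (evDA D A d a) := by
  have hmeas : ∀ (d : ℕ) (a : Fin K → ℕ), MeasurableSet (evDA D A d a) := by
    intro d a
    have : evDA D A d a = D ⁻¹' {d} ∩ A ⁻¹' {a} := rfl
    rw [this]
    exact (hD (measurableSet_singleton d)).inter (hA (measurableSet_singleton a))
  have hg : g = fun ω => ∑ d ∈ ({0,1} : Finset ℕ), ∑ a ∈ 𝒜,
      (evDA D A d a).indicator (fun _ => f d a) ω := by
    funext ω
    rw [hfg]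
    have h1 : ∀ d : ℕ, (∑ a ∈ 𝒜, (evDA D A d a).indicator (fun _ => f d a) ω)
        = if D ω = d then f d (A ω) else 0 := by
      intro d
      by_cases hd : D ω = d
      · rw [if_pos hd, Finset.sum_eq_single (A ω)]
        · simp [Set.indicator_apply, evDA, hd]
        · intro b _ hb
          simp [Set.indicator_apply, evDA, Ne.symm hb]
        · intro h; exact absurd (hAsupp ω) h
      · rw [if_neg hd]
        refine Finset.sum_eq_zero fun b _ => ?_
        simp [Set.indicator_apply, evDA, hd]
    rw [Finset.sum_congr rfl (fun d _ => h1 d)]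
    rcases hDbin ω with h | h <;>
      simp [h, Finset.sum_pair (show (0:ℕ) ≠ 1 by norm_num)]
  have hint : ∀ (d : ℕ) (a : Fin K → ℕ),
      Integrable ((evDA D A d a).indicator (fun _ => f d a)) P :=
    fun d a => (integrable_const (f d a)).indicator (hmeas d a)
  calc Exp P g
      = ∑ d ∈ ({0,1} : Finset ℕ), ∫ ω, (∑ a ∈ 𝒜,
          (evDA D A d a).indicator (fun _ => f d a) ω) ∂P := by
        unfold Exp
        rw [hg]
        exact integral_finset_sum _ fun d _ =>
          integrable_finset_sum _ fun a _ => hint d a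
    _ = ∑ d ∈ ({0,1} : Finset ℕ), ∑ a ∈ 𝒜, f d a * Pr P (evDA D A d a) := by
        refine Finset.sum_congr rfl fun d _ => ?_
        rw [integral_finset_sum _ fun a _ => hint d a]
        refine Finset.sum_congr rfl fun a _ => ?_
        rw [integral_indicator_const _ (hmeas d a)]
        simp [Pr, mul_comm, measureReal_def]

lemma Cov_comm (P : Measure Ω) (X Y : Ω → ℝ) : Cov P X Y = Cov P Y X := by
  unfold Cov
  rw [show (fun ω => X ω * Y ω) = fun ω => Y ω * X ω from funext fun ω => mul_comm _ _,
    mul_comm (Exp P X)]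

section MatrixPart2
variable (P : Measure Ω) (D : Ω → ℕ) (A : Ω → Fin K → ℕ)

lemma varW_posdef (hPD : (covDADmat P D A).PosDef) : (varWmat P D A).PosDef := by
  rw [Matrix.posDef_iff_dotProduct_mulVec]
  constructor
  · show Matrix.conjTranspose (varWmat P D A) = varWmat P D A
    ext u v
    simp only [Matrix.conjTranspose_apply, star_trivial]
    exact Cov_comm P _ _
  · intro x hx
    have hy : (Sum.elim (fun _ => (0:ℝ)) x : Unit ⊕ (Fin K ⊕ Fin K) → ℝ) ≠ 0 := by
      intro h
      apply hx
      funext v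
      have := congrFun h (Sum.inr v)
      simpa using this
    have h := hPD.dotProduct_mulVec_pos hy
    convert h using 1
    simp [dotProduct, Matrix.mulVec, Fintype.sum_sum_type,
      covDADmat, varWmat, DADvec, Matrix.of_apply]

lemma key_matrix (hPD : (covDADmat P D A).PosDef) :
    ∀ u, ∑ v, Minter P D A v * varWmat P D A v u = covDW P D A u := by
  have hdet : IsUnit (varWmat P D A).det :=
    isUnit_iff_ne_zero.mpr (varW_posdef P D A hPD).det_pos.ne'
  have hinv : (varWmat P D A)⁻¹ * varWmat P D A = 1 := Matrix.nonsing_inv_mul _ hdet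
  intro u
  have h1 : ∀ v, Minter P D A v * varWmat P D A v u
      = ∑ w, covDW P D A w * ((varWmat P D A)⁻¹ w v * varWmat P D A v u) := by
    intro v
    unfold Minter
    rw [Finset.sum_mul]
    exact Finset.sum_congr rfl fun w _ => mul_assoc _ _ _
  rw [Finset.sum_congr rfl fun v _ => h1 v, Finset.sum_comm]
  have h2 : ∀ w, (∑ v, covDW P D A w * ((varWmat P D A)⁻¹ w v * varWmat P D A v u))
      = covDW P D A w * (1 : Matrix (Fin K ⊕ Fin K) (Fin K ⊕ Fin K) ℝ) w u := by
    intro w; rw [← Finset.mul_sum, ← Matrix.mul_apply, hinv]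
  rw [Finset.sum_congr rfl fun w _ => h2 w]
  simp [Matrix.one_apply, mul_ite]

lemma key_matrix' (hPD : (covDADmat P D A).PosDef) :
    ∀ v, ∑ w, varWmat P D A v w * Minter P D A w = covDW P D A v := by
  intro v
  rw [Finset.sum_congr rfl fun w _ => by
    rw [show varWmat P D A v w = varWmat P D A w v from Cov_comm P _ _, mul_comm]]
  exact key_matrix P D A hPD v

lemma denomI_pos (hPD : (covDADmat P D A).PosDef) : 0 < denomI P D A := by
  set x : Unit ⊕ (Fin K ⊕ Fin K) → ℝ :=
    Sum.elim (fun _ => 1) (fun v => -(Minter P D A v)) with hxdef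
  have hx : x ≠ 0 := by
    intro h
    have := congrFun h (Sum.inl ())
    simp [hxdef] at this
  have h := hPD.dotProduct_mulVec_pos hx
  have hquad : dotProduct (star x) ((covDADmat P D A).mulVec x) = denomI P D A := by
    have hS00 : ∀ (u u' : Unit), covDADmat P D A (Sum.inl u) (Sum.inl u') = varD P D :=
      fun _ _ => rfl
    have hS0w : ∀ (u : Unit) (w : Fin K ⊕ Fin K),
        covDADmat P D A (Sum.inl u) (Sum.inr w) = covDW P D A w := fun _ _ => rfl
    have hSw0 : ∀ (w : Fin K ⊕ Fin K) (u : Unit),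
        covDADmat P D A (Sum.inr w) (Sum.inl u) = covDW P D A w :=
      fun _ _ => Cov_comm P _ _
    have hSww : ∀ v w : Fin K ⊕ Fin K,
        covDADmat P D A (Sum.inr v) (Sum.inr w) = varWmat P D A v w := fun _ _ => rfl
    have hrow : ∀ v : Fin K ⊕ Fin K,
        (∑ w : Fin K ⊕ Fin K, varWmat P D A v w * -(Minter P D A w)) = -(covDW P D A v) := by
      intro v
      rw [← key_matrix' P D A hPD v, ← Finset.sum_neg_distrib]
      exact Finset.sum_congr rfl fun w _ => by ring
    have hstar : star x = x := funext fun i => by simp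
    have hmv : ∀ i, (covDADmat P D A).mulVec x i
        = covDADmat P D A i (Sum.inl ()) * x (Sum.inl ())
          + ∑ w : Fin K ⊕ Fin K, covDADmat P D A i (Sum.inr w) * x (Sum.inr w) := by
      intro i
      rw [Matrix.mulVec, dotProduct, Fintype.sum_sum_type]
      simp
    rw [dotProduct, hstar, Fintype.sum_sum_type]
    simp only [hmv]
    simp only [hmv, hS00, hS0w, hSw0, hSww, hxdef, Sum.elim_inl, Sum.elim_inr]
    simp only [hrow]
    have e1 : (∑ w : Fin K ⊕ Fin K, covDW P D A w * -(Minter P D A w))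
        = -(∑ w : Fin K ⊕ Fin K, Minter P D A w * covDW P D A w) := by
      rw [← Finset.sum_neg_distrib]
      exact Finset.sum_congr rfl fun w _ => by ring
    simp only [e1]
    have e2 : ∀ v : Fin K ⊕ Fin K,
        -(Minter P D A v) * (covDW P D A v * 1 + -covDW P D A v) = 0 := fun v => by ring
    simp only [e2, Finset.sum_const_zero, add_zero]
    simp only [Finset.univ_unique, Finset.sum_singleton]
    unfold denomI
    ring
  rw [← hquad]; exact h

end MatrixPart2

lemma lincomb2 {α : Type*} (s : Finset α) (c1 c2 : ℝ) (f1 f2 : α → ℝ) :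
    ∑ a ∈ s, (c1 * f1 a + c2 * f2 a) = c1 * ∑ a ∈ s, f1 a + c2 * ∑ a ∈ s, f2 a := by
  rw [Finset.sum_add_distrib, Finset.mul_sum, Finset.mul_sum]

lemma alg1 {K : ℕ} (𝒜 : Finset (Fin K → ℕ)) (q1 : (Fin K → ℕ) → ℝ)
    (Ml Mr E T1 c : Fin K → ℝ) (s1 V dI : ℝ)
    (hs1 : s1 = ∑ a ∈ 𝒜, q1 a) (hs1ne : s1 ≠ 0) (hdne : dI ≠ 0)
    (hT1 : ∀ j, T1 j = ∑ a ∈ 𝒜, (a j : ℝ) * q1 a)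
    (hc : ∀ j, c j = T1 j / s1)
    (hdI : dI = V - (∑ j, Ml j * (T1 j - s1 * E j) + ∑ j, Mr j * (T1 j - s1 * T1 j))) :
    ∑ a ∈ 𝒜, q1 a / s1 * (V - s1 * ∑ j, Ml j * ((a j : ℝ) - E j)
        - s1 * ∑ j, Mr j * ((a j : ℝ) - s1 * c j)) / dI = 1 := by
  have h1 : ∀ a ∈ 𝒜, q1 a / s1 * (V - s1 * ∑ j, Ml j * ((a j : ℝ) - E j)
        - s1 * ∑ j, Mr j * ((a j : ℝ) - s1 * c j)) / dI
      = (q1 a * V - s1 * ∑ j, q1 a * (Ml j * ((a j : ℝ) - E j))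
          - s1 * ∑ j, q1 a * (Mr j * ((a j : ℝ) - s1 * c j))) / s1 / dI := by
    intro a _
    rw [← Finset.mul_sum Finset.univ _ (q1 a), ← Finset.mul_sum Finset.univ _ (q1 a)]
    ring
  rw [Finset.sum_congr rfl h1, ← Finset.sum_div, ← Finset.sum_div]
  have h2 : (∑ a ∈ 𝒜, (q1 a * V - s1 * ∑ j, q1 a * (Ml j * ((a j : ℝ) - E j))
          - s1 * ∑ j, q1 a * (Mr j * ((a j : ℝ) - s1 * c j))))
      = (∑ a ∈ 𝒜, q1 a) * V
        - s1 * ∑ j, ∑ a ∈ 𝒜, q1 a * (Ml j * ((a j : ℝ) - E j))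
        - s1 * ∑ j, ∑ a ∈ 𝒜, q1 a * (Mr j * ((a j : ℝ) - s1 * c j)) := by
    rw [Finset.sum_sub_distrib, Finset.sum_sub_distrib, ← Finset.sum_mul,
      ← Finset.mul_sum 𝒜 _ s1, ← Finset.mul_sum 𝒜 _ s1,
      Finset.sum_comm (f := fun a j => q1 a * (Ml j * ((a j : ℝ) - E j))),
      Finset.sum_comm (f := fun a j => q1 a * (Mr j * ((a j : ℝ) - s1 * c j)))]
  rw [h2]
  have h3 : ∀ j, (∑ a ∈ 𝒜, q1 a * (Ml j * ((a j : ℝ) - E j)))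
      = Ml j * T1 j + (-(Ml j * E j)) * s1 := by
    intro j
    rw [Finset.sum_congr rfl (fun a _ => show q1 a * (Ml j * ((a j : ℝ) - E j))
        = Ml j * ((a j : ℝ) * q1 a) + (-(Ml j * E j)) * q1 a from by ring),
      lincomb2, ← hT1, ← hs1]
  have h4 : ∀ j, (∑ a ∈ 𝒜, q1 a * (Mr j * ((a j : ℝ) - s1 * c j)))
      = Mr j * T1 j + (-(Mr j * T1 j)) * s1 := by
    intro j
    rw [Finset.sum_congr rfl (fun a _ => show q1 a * (Mr j * ((a j : ℝ) - s1 * c j))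
        = Mr j * ((a j : ℝ) * q1 a) + (-(Mr j * T1 j)) * q1 a from by
          rw [hc j]; field_simp; ring),
      lincomb2, ← hT1, ← hs1]
  rw [Finset.sum_congr rfl (fun j _ => h3 j), Finset.sum_congr rfl (fun j _ => h4 j), ← hs1]
  have h5 : (∑ j, (Ml j * T1 j + (-(Ml j * E j)) * s1))
      = ∑ j, Ml j * (T1 j - s1 * E j) :=
    Finset.sum_congr rfl fun j _ => by ring
  have h6 : (∑ j, (Mr j * T1 j + (-(Mr j * T1 j)) * s1))
      = ∑ j, Mr j * (T1 j - s1 * T1 j) :=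
    Finset.sum_congr rfl fun j _ => by ring
  rw [h5, h6]
  have hXne : V - ((∑ j, Ml j * (T1 j - s1 * E j)) + ∑ j, Mr j * (T1 j - s1 * T1 j)) ≠ 0 :=
    hdI ▸ hdne
  rw [hdI, div_eq_one_iff_eq hXne, div_eq_iff hs1ne]
  ring

lemma alg2 {K : ℕ} (𝒜 : Finset (Fin K → ℕ)) (q0 q1 pA : (Fin K → ℕ) → ℝ)
    (Ml Mr E T0 T1 c : Fin K → ℝ) (s0 s1 V dI : ℝ)
    (hs0 : s0 = ∑ a ∈ 𝒜, q0 a) (hs1 : s1 = ∑ a ∈ 𝒜, q1 a)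
    (hs0ne : s0 ≠ 0) (hs1ne : s1 ≠ 0)
    (hT0 : ∀ j, T0 j = ∑ a ∈ 𝒜, (a j : ℝ) * q0 a)
    (hT1 : ∀ j, T1 j = ∑ a ∈ 𝒜, (a j : ℝ) * q1 a)
    (hpA : ∀ a ∈ 𝒜, pA a = q0 a + q1 a)
    (hE : ∀ j, E j = T0 j + T1 j)
    (hc : ∀ j, c j = T1 j / s1)
    (htot : s0 + s1 = 1) :
    ∑ a ∈ 𝒜, (V * (q1 a / s1 - q0 a / s0)
        - ∑ j, Ml j * pA a * ((a j : ℝ) - E j)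
        - s1 * ∑ j, Mr j * (q1 a / s1 * (a j : ℝ) - pA a * c j)) / dI = 0 := by
  have h1 : ∀ a ∈ 𝒜, (V * (q1 a / s1 - q0 a / s0)
        - ∑ j, Ml j * pA a * ((a j : ℝ) - E j)
        - s1 * ∑ j, Mr j * (q1 a / s1 * (a j : ℝ) - pA a * c j)) / dI
      = (V * (q1 a / s1 - q0 a / s0)
        - ∑ j, (Ml j * ((a j : ℝ) * (q0 a + q1 a)) + (-(Ml j * E j)) * (q0 a + q1 a))
        - ∑ j, (Mr j * ((a j : ℝ) * q1 a) + (-(Mr j * T1 j)) * (q0 a + q1 a))) / dI := by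
    intro a ha
    rw [hpA a ha, Finset.mul_sum]
    refine congrArg (· / dI) (congrArg₂ (· - ·) (congrArg₂ (· - ·) rfl ?_) ?_)
    · exact Finset.sum_congr rfl fun j _ => by ring
    · refine Finset.sum_congr rfl fun j _ => ?_
      rw [hc j]
      field_simp
      ring
  rw [Finset.sum_congr rfl h1, ← Finset.sum_div]
  have h2 : (∑ a ∈ 𝒜, (V * (q1 a / s1 - q0 a / s0)
        - ∑ j, (Ml j * ((a j : ℝ) * (q0 a + q1 a)) + (-(Ml j * E j)) * (q0 a + q1 a))
        - ∑ j, (Mr j * ((a j : ℝ) * q1 a) + (-(Mr j * T1 j)) * (q0 a + q1 a))))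
      = (∑ a ∈ 𝒜, V * (q1 a / s1 - q0 a / s0))
        - ∑ j, ∑ a ∈ 𝒜, (Ml j * ((a j : ℝ) * (q0 a + q1 a)) + (-(Ml j * E j)) * (q0 a + q1 a))
        - ∑ j, ∑ a ∈ 𝒜, (Mr j * ((a j : ℝ) * q1 a) + (-(Mr j * T1 j)) * (q0 a + q1 a)) := by
    rw [Finset.sum_sub_distrib, Finset.sum_sub_distrib,
      Finset.sum_comm (f := fun a j => Ml j * ((a j : ℝ) * (q0 a + q1 a)) + (-(Ml j * E j)) * (q0 a + q1 a)),
      Finset.sum_comm (f := fun a j => Mr j * ((a j : ℝ) * q1 a) + (-(Mr j * T1 j)) * (q0 a + q1 a))]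
  rw [h2]
  have hsplit1 : ∀ j, (∑ a ∈ 𝒜, ((a j : ℝ) * (q0 a + q1 a))) = T0 j + T1 j := by
    intro j
    rw [Finset.sum_congr rfl (fun a _ => show (a j : ℝ) * (q0 a + q1 a)
        = (a j : ℝ) * q0 a + (a j : ℝ) * q1 a from by ring),
      Finset.sum_add_distrib, ← hT0, ← hT1]
  have hsplit0 : (∑ a ∈ 𝒜, (q0 a + q1 a)) = s0 + s1 := by
    rw [Finset.sum_add_distrib, ← hs0, ← hs1]
  have h3 : ∀ j : Fin K, (∑ a ∈ 𝒜, (Ml j * ((a j : ℝ) * (q0 a + q1 a))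
      + (-(Ml j * E j)) * (q0 a + q1 a))) = 0 := by
    intro j
    rw [lincomb2, hsplit1 j, hsplit0, hE j]
    linear_combination (-(Ml j * (T0 j + T1 j))) * htot
  have h4 : ∀ j : Fin K, (∑ a ∈ 𝒜, (Mr j * ((a j : ℝ) * q1 a)
      + (-(Mr j * T1 j)) * (q0 a + q1 a))) = 0 := by
    intro j
    rw [lincomb2, ← hT1, hsplit0]
    linear_combination (-(Mr j * T1 j)) * htot
  simp only [h3, h4, Finset.sum_const_zero, sub_zero]
  have h5 : (∑ a ∈ 𝒜, V * (q1 a / s1 - q0 a / s0)) = 0 := by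
    rw [Finset.sum_congr rfl (fun a _ => show V * (q1 a / s1 - q0 a / s0)
        = (V / s1) * q1 a + (-(V / s0)) * q0 a from by ring),
      lincomb2, ← hs0, ← hs1]
    field_simp
    ring
  rw [h5, zero_div]

lemma alg3 {K : ℕ} (𝒜 : Finset (Fin K → ℕ)) (q0 q1 pA : (Fin K → ℕ) → ℝ)
    (Ml Mr E T0 T1 c : Fin K → ℝ) (G0 G1 : Fin K → Fin K → ℝ) (s0 s1 V dI : ℝ) (u : Fin K)
    (hs0 : s0 = ∑ a ∈ 𝒜, q0 a) (hs1 : s1 = ∑ a ∈ 𝒜, q1 a)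
    (hs0ne : s0 ≠ 0) (hs1ne : s1 ≠ 0)
    (hT0 : ∀ j, T0 j = ∑ a ∈ 𝒜, (a j : ℝ) * q0 a)
    (hT1 : ∀ j, T1 j = ∑ a ∈ 𝒜, (a j : ℝ) * q1 a)
    (hG0 : ∀ j, G0 j u = ∑ a ∈ 𝒜, (a j : ℝ) * (a u : ℝ) * q0 a)
    (hG1 : ∀ j, G1 j u = ∑ a ∈ 𝒜, (a j : ℝ) * (a u : ℝ) * q1 a)
    (hpA : ∀ a ∈ 𝒜, pA a = q0 a + q1 a)
    (hE : ∀ j, E j = T0 j + T1 j)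
    (hc : ∀ j, c j = T1 j / s1)
    (htot : s0 + s1 = 1)
    (hV : V = s1 - s1 * s1)
    (hkeyu : T1 u - s1 * E u = (∑ j, Ml j * (G0 j u + G1 j u - E j * E u))
        + ∑ j, Mr j * (G1 j u - T1 j * E u)) :
    ∑ a ∈ 𝒜, (a u : ℝ) * ((V * (q1 a / s1 - q0 a / s0)
        - ∑ j, Ml j * pA a * ((a j : ℝ) - E j)
        - s1 * ∑ j, Mr j * (q1 a / s1 * (a j : ℝ) - pA a * c j)) / dI) = 0 := by
  have h1 : ∀ a ∈ 𝒜, (a u : ℝ) * ((V * (q1 a / s1 - q0 a / s0)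
        - ∑ j, Ml j * pA a * ((a j : ℝ) - E j)
        - s1 * ∑ j, Mr j * (q1 a / s1 * (a j : ℝ) - pA a * c j)) / dI)
      = ((a u : ℝ) * (V * (q1 a / s1 - q0 a / s0))
        - ∑ j, (Ml j * ((a j : ℝ) * (a u : ℝ) * (q0 a + q1 a))
            + (-(Ml j * E j)) * ((a u : ℝ) * (q0 a + q1 a)))
        - ∑ j, (Mr j * ((a j : ℝ) * (a u : ℝ) * q1 a)
            + (-(Mr j * T1 j)) * ((a u : ℝ) * (q0 a + q1 a)))) / dI := by
    intro a ha
    rw [hpA a ha, ← mul_div_assoc]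
    refine congrArg (· / dI) ?_
    rw [mul_sub, mul_sub, Finset.mul_sum, Finset.mul_sum, Finset.mul_sum]
    refine congrArg₂ (· - ·) (congrArg₂ (· - ·) rfl ?_) ?_
    · exact Finset.sum_congr rfl fun j _ => by ring
    · refine Finset.sum_congr rfl fun j _ => ?_
      rw [hc j]
      field_simp
      ring
  rw [Finset.sum_congr rfl h1, ← Finset.sum_div]
  have h2 : (∑ a ∈ 𝒜, ((a u : ℝ) * (V * (q1 a / s1 - q0 a / s0))
        - ∑ j, (Ml j * ((a j : ℝ) * (a u : ℝ) * (q0 a + q1 a))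
            + (-(Ml j * E j)) * ((a u : ℝ) * (q0 a + q1 a)))
        - ∑ j, (Mr j * ((a j : ℝ) * (a u : ℝ) * q1 a)
            + (-(Mr j * T1 j)) * ((a u : ℝ) * (q0 a + q1 a)))))
      = (∑ a ∈ 𝒜, (a u : ℝ) * (V * (q1 a / s1 - q0 a / s0)))
        - ∑ j, ∑ a ∈ 𝒜, (Ml j * ((a j : ℝ) * (a u : ℝ) * (q0 a + q1 a))
            + (-(Ml j * E j)) * ((a u : ℝ) * (q0 a + q1 a)))
        - ∑ j, ∑ a ∈ 𝒜, (Mr j * ((a j : ℝ) * (a u : ℝ) * q1 a)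
            + (-(Mr j * T1 j)) * ((a u : ℝ) * (q0 a + q1 a))) := by
    rw [Finset.sum_sub_distrib, Finset.sum_sub_distrib,
      Finset.sum_comm (f := fun a j => Ml j * ((a j : ℝ) * (a u : ℝ) * (q0 a + q1 a))
            + (-(Ml j * E j)) * ((a u : ℝ) * (q0 a + q1 a))),
      Finset.sum_comm (f := fun a j => Mr j * ((a j : ℝ) * (a u : ℝ) * q1 a)
            + (-(Mr j * T1 j)) * ((a u : ℝ) * (q0 a + q1 a)))]
  rw [h2]
  have hsplitG : ∀ j, (∑ a ∈ 𝒜, ((a j : ℝ) * (a u : ℝ) * (q0 a + q1 a))) = G0 j u + G1 j u := by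
    intro j
    rw [Finset.sum_congr rfl (fun a _ => show (a j : ℝ) * (a u : ℝ) * (q0 a + q1 a)
        = (a j : ℝ) * (a u : ℝ) * q0 a + (a j : ℝ) * (a u : ℝ) * q1 a from by ring),
      Finset.sum_add_distrib, ← hG0, ← hG1]
  have hsplitE : (∑ a ∈ 𝒜, ((a u : ℝ) * (q0 a + q1 a))) = T0 u + T1 u := by
    rw [Finset.sum_congr rfl (fun a _ => show (a u : ℝ) * (q0 a + q1 a)
        = (a u : ℝ) * q0 a + (a u : ℝ) * q1 a from by ring),
      Finset.sum_add_distrib, ← hT0, ← hT1]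
  have h3 : ∀ j : Fin K, (∑ a ∈ 𝒜, (Ml j * ((a j : ℝ) * (a u : ℝ) * (q0 a + q1 a))
      + (-(Ml j * E j)) * ((a u : ℝ) * (q0 a + q1 a))))
      = Ml j * (G0 j u + G1 j u - E j * E u) := by
    intro j
    rw [lincomb2, hsplitG j, hsplitE, ← hE u]
    ring
  have h4 : ∀ j : Fin K, (∑ a ∈ 𝒜, (Mr j * ((a j : ℝ) * (a u : ℝ) * q1 a)
      + (-(Mr j * T1 j)) * ((a u : ℝ) * (q0 a + q1 a))))
      = Mr j * (G1 j u - T1 j * E u) := by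
    intro j
    rw [lincomb2, ← hG1, hsplitE, ← hE u]
    ring
  have h5 : (∑ a ∈ 𝒜, (a u : ℝ) * (V * (q1 a / s1 - q0 a / s0))) = T1 u - s1 * E u := by
    rw [Finset.sum_congr rfl (fun a _ => show (a u : ℝ) * (V * (q1 a / s1 - q0 a / s0))
        = (V / s1) * ((a u : ℝ) * q1 a) + (-(V / s0)) * ((a u : ℝ) * q0 a) from by ring),
      lincomb2, ← hT0, ← hT1, hE u, hV]
    have hs0' : s0 = 1 - s1 := by linarith
    rw [hs0']
    have hs0ne' : (1 : ℝ) - s1 ≠ 0 := hs0' ▸ hs0ne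
    field_simp
    ring
  rw [Finset.sum_congr rfl (fun j _ => h3 j), Finset.sum_congr rfl (fun j _ => h4 j), h5,
    hkeyu, add_sub_cancel_left, sub_self, zero_div]


/-- Interaction-regression weight identities: Σ ω_dce^i(a) = 1, Σ ω_ind^i(a) = 0, and
Σ a_u·ω_ind^i(a) = 0 for every coordinate u. -/
theorem interaction_regression_weight_identities
    (P : Measure Ω) [IsProbabilityMeasure P]
    (D : Ω → ℕ) (A : Ω → Fin K → ℕ) (𝒜 : Finset (Fin K → ℕ))
    (hD : Measurable D) (hA : Measurable A)
    (hDbin : ∀ ω, D ω = 0 ∨ D ω = 1)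
    (hAsupp : ∀ ω, A ω ∈ 𝒜) (h𝒜0 : (0 : Fin K → ℕ) ∈ 𝒜)
    (hpos : ∀ d ∈ ({0, 1} : Finset ℕ), ∀ a ∈ 𝒜, 0 < Pr P (evDA D A d a))
    (hPD : (covDADmat P D A).PosDef)
    :
    (∑ a ∈ 𝒜, wdceI P D A a) = 1
    ∧ (∑ a ∈ 𝒜, windI P D A a) = 0
    ∧ ∀ u : Fin K, (∑ a ∈ 𝒜, (a u : ℝ) * windI P D A a) = 0 := by
  have EE := Exp_eq_sum P D A 𝒜 hD hA hDbin hAsupp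
  have h01 : (0:ℕ) ≠ 1 := by norm_num
  have h𝒜ne : 𝒜.Nonempty := ⟨0, h𝒜0⟩
  have hs1pos : 0 < ∑ a ∈ 𝒜, Pr P (evDA D A 1 a) :=
    Finset.sum_pos (fun a ha => hpos 1 (by simp) a ha) h𝒜ne
  have hs0pos : 0 < ∑ a ∈ 𝒜, Pr P (evDA D A 0 a) :=
    Finset.sum_pos (fun a ha => hpos 0 (by simp) a ha) h𝒜ne
  have hmeasD : ∀ d : ℕ, MeasurableSet (evD D d) := fun d => hD (measurableSet_singleton d)
  have hmeasA : ∀ a : Fin K → ℕ, MeasurableSet (evA A a) :=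
    fun a => hA (measurableSet_singleton a)
  -- Pr of evD
  have hPrind : ∀ d : ℕ, Pr P (evD D d) = Exp P (fun ω => if D ω = d then (1:ℝ) else 0) := by
    intro d
    have hfun : (fun ω => if D ω = d then (1:ℝ) else 0)
        = (evD D d).indicator (fun _ => (1:ℝ)) := by
      funext ω
      simp [Set.indicator_apply, evD]
    rw [Exp, hfun, integral_indicator_const _ (hmeasD d)]
    simp [Pr, measureReal_def]
  have hPrD1 : Pr P (evD D 1) = ∑ a ∈ 𝒜, Pr P (evDA D A 1 a) := by
    rw [hPrind 1,
      EE (fun ω => if D ω = 1 then (1:ℝ) else 0) (fun d _ => if d = 1 then (1:ℝ) else 0)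
        (fun ω => rfl),
      Finset.sum_pair h01]
    simp
  have hPrD0 : Pr P (evD D 0) = ∑ a ∈ 𝒜, Pr P (evDA D A 0 a) := by
    rw [hPrind 0,
      EE (fun ω => if D ω = 0 then (1:ℝ) else 0) (fun d _ => if d = 0 then (1:ℝ) else 0)
        (fun ω => rfl),
      Finset.sum_pair h01]
    simp
  have hs1ne : Pr P (evD D 1) ≠ 0 := by rw [hPrD1]; exact hs1pos.ne'
  have hs0ne : Pr P (evD D 0) ≠ 0 := by rw [hPrD0]; exact hs0pos.ne'
  -- Pr of evA
  have hPrA : ∀ a ∈ 𝒜, Pr P (evA A a) = Pr P (evDA D A 0 a) + Pr P (evDA D A 1 a) := by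
    intro a ha
    have hfun : (fun ω => if A ω = a then (1:ℝ) else 0)
        = (evA A a).indicator (fun _ => (1:ℝ)) := by
      funext ω
      simp [Set.indicator_apply, evA]
    have hPr : Pr P (evA A a) = Exp P (fun ω => if A ω = a then (1:ℝ) else 0) := by
      rw [Exp, hfun, integral_indicator_const _ (hmeasA a)]
      simp [Pr, measureReal_def]
    rw [hPr,
      EE (fun ω => if A ω = a then (1:ℝ) else 0) (fun _ a' => if a' = a then (1:ℝ) else 0)
        (fun ω => rfl),
      Finset.sum_pair h01]
    simp [ite_mul, ha]
  -- total mass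
  have htot : Pr P (evD D 0) + Pr P (evD D 1) = 1 := by
    have h1' := EE (fun _ => (1:ℝ)) (fun _ _ => (1:ℝ)) (fun ω => rfl)
    rw [Finset.sum_pair h01] at h1'
    simp only [one_mul] at h1'
    have hc1 : Exp P (fun _ => (1:ℝ)) = 1 := by simp [Exp]
    rw [hPrD0, hPrD1, ← h1']
    exact hc1
  -- expectations
  have hExpD : Exp P (fun ω => (D ω : ℝ)) = ∑ a ∈ 𝒜, Pr P (evDA D A 1 a) := by
    rw [EE (fun ω => (D ω : ℝ)) (fun d _ => (d : ℝ)) (fun ω => rfl), Finset.sum_pair h01]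
    simp
  have hExpDD : Exp P (fun ω => (D ω : ℝ) * (D ω : ℝ)) = ∑ a ∈ 𝒜, Pr P (evDA D A 1 a) := by
    rw [EE (fun ω => (D ω : ℝ) * (D ω : ℝ)) (fun d _ => (d : ℝ) * (d : ℝ)) (fun ω => rfl),
      Finset.sum_pair h01]
    simp
  have hExpDA : ∀ j, Exp P (fun ω => (D ω : ℝ) * (A ω j : ℝ))
      = ∑ a ∈ 𝒜, (a j : ℝ) * Pr P (evDA D A 1 a) := by
    intro j
    rw [EE (fun ω => (D ω : ℝ) * (A ω j : ℝ)) (fun d a => (d : ℝ) * (a j : ℝ)) (fun ω => rfl),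
      Finset.sum_pair h01]
    simp
  have hExpAD : ∀ j, Exp P (fun ω => (A ω j : ℝ) * (D ω : ℝ))
      = ∑ a ∈ 𝒜, (a j : ℝ) * Pr P (evDA D A 1 a) := by
    intro j
    rw [EE (fun ω => (A ω j : ℝ) * (D ω : ℝ)) (fun d a => (a j : ℝ) * (d : ℝ)) (fun ω => rfl),
      Finset.sum_pair h01]
    simp
  have hExpDAD : ∀ j, Exp P (fun ω => (D ω : ℝ) * ((A ω j : ℝ) * (D ω : ℝ)))
      = ∑ a ∈ 𝒜, (a j : ℝ) * Pr P (evDA D A 1 a) := by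
    intro j
    rw [EE (fun ω => (D ω : ℝ) * ((A ω j : ℝ) * (D ω : ℝ)))
      (fun d a => (d : ℝ) * ((a j : ℝ) * (d : ℝ))) (fun ω => rfl), Finset.sum_pair h01]
    simp
  have hExpA : ∀ j, Exp P (fun ω => (A ω j : ℝ))
      = (∑ a ∈ 𝒜, (a j : ℝ) * Pr P (evDA D A 0 a))
        + ∑ a ∈ 𝒜, (a j : ℝ) * Pr P (evDA D A 1 a) := by
    intro j
    rw [EE (fun ω => (A ω j : ℝ)) (fun _ a => (a j : ℝ)) (fun ω => rfl), Finset.sum_pair h01]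
  have hExpAA : ∀ j u, Exp P (fun ω => (A ω j : ℝ) * (A ω u : ℝ))
      = (∑ a ∈ 𝒜, (a j : ℝ) * (a u : ℝ) * Pr P (evDA D A 0 a))
        + ∑ a ∈ 𝒜, (a j : ℝ) * (a u : ℝ) * Pr P (evDA D A 1 a) := by
    intro j u
    rw [EE (fun ω => (A ω j : ℝ) * (A ω u : ℝ)) (fun _ a => (a j : ℝ) * (a u : ℝ))
      (fun ω => rfl), Finset.sum_pair h01]
  have hExpADA : ∀ j u, Exp P (fun ω => (A ω j : ℝ) * (D ω : ℝ) * (A ω u : ℝ))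
      = ∑ a ∈ 𝒜, (a j : ℝ) * (a u : ℝ) * Pr P (evDA D A 1 a) := by
    intro j u
    rw [EE (fun ω => (A ω j : ℝ) * (D ω : ℝ) * (A ω u : ℝ))
      (fun d a => (a j : ℝ) * (d : ℝ) * (a u : ℝ)) (fun ω => rfl), Finset.sum_pair h01]
    simp [mul_assoc, mul_comm]
  -- conditional expectation
  have hcondA1 : ∀ j, condA1 P D A j
      = (∑ a ∈ 𝒜, (a j : ℝ) * Pr P (evDA D A 1 a)) / Pr P (evD D 1) := by
    intro j
    simp only [condA1, CE]
    congr 1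
    rw [EE (fun ω => (A ω j : ℝ) * (evD D 1).indicator (fun _ => (1:ℝ)) ω)
      (fun d a => (a j : ℝ) * (if d = 1 then (1:ℝ) else 0))
      (fun ω => by simp [Set.indicator_apply, evD]), Finset.sum_pair h01]
    simp
  -- variance of D
  have hvarD : varD P D = Pr P (evD D 1) - Pr P (evD D 1) * Pr P (evD D 1) := by
    simp only [varD, Cov]
    rw [hExpDD, hExpD, ← hPrD1]
  -- covDW entries
  have hcovDWl : ∀ j, covDW P D A (Sum.inl j)
      = (∑ a ∈ 𝒜, (a j : ℝ) * Pr P (evDA D A 1 a))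
        - Pr P (evD D 1) * Exp P (fun ω => (A ω j : ℝ)) := by
    intro j
    simp only [covDW, Wvec, Sum.elim_inl, Cov]
    rw [hExpDA j, hExpD, ← hPrD1]
  have hcovDWr : ∀ j, covDW P D A (Sum.inr j)
      = (∑ a ∈ 𝒜, (a j : ℝ) * Pr P (evDA D A 1 a))
        - Pr P (evD D 1) * ∑ a ∈ 𝒜, (a j : ℝ) * Pr P (evDA D A 1 a) := by
    intro j
    simp only [covDW, Wvec, Sum.elim_inl, Sum.elim_inr, Cov]
    rw [hExpDAD j, hExpD, hExpAD j, ← hPrD1]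
  -- denomI expansion
  have hdI' : denomI P D A = varD P D
      - ((∑ j, Minter P D A (Sum.inl j) * ((∑ a ∈ 𝒜, (a j : ℝ) * Pr P (evDA D A 1 a))
            - Pr P (evD D 1) * Exp P (fun ω => (A ω j : ℝ))))
        + ∑ j, Minter P D A (Sum.inr j) * ((∑ a ∈ 𝒜, (a j : ℝ) * Pr P (evDA D A 1 a))
            - Pr P (evD D 1) * ∑ a ∈ 𝒜, (a j : ℝ) * Pr P (evDA D A 1 a))) := by
    simp only [denomI]
    rw [Fintype.sum_sum_type]
    exact congrArg₂ (· - ·) rfl (congrArg₂ (· + ·)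
      (Finset.sum_congr rfl fun j _ => by rw [hcovDWl j])
      (Finset.sum_congr rfl fun j _ => by rw [hcovDWr j]))
  have hdne : denomI P D A ≠ 0 := (denomI_pos P D A hPD).ne'
  refine ⟨?_, ?_, fun u => ?_⟩
  · simp only [wdceI, piP]
    exact alg1 𝒜 (fun a => Pr P (evDA D A 1 a))
      (fun j => Minter P D A (Sum.inl j)) (fun j => Minter P D A (Sum.inr j))
      (fun j => Exp P (fun ω => (A ω j : ℝ)))
      (fun j => ∑ a ∈ 𝒜, (a j : ℝ) * Pr P (evDA D A 1 a))
      (condA1 P D A) (Pr P (evD D 1)) (varD P D) (denomI P D A)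
      hPrD1 hs1ne hdne (fun j => rfl) hcondA1 hdI'
  · simp only [windI, piP]
    exact alg2 𝒜 (fun a => Pr P (evDA D A 0 a)) (fun a => Pr P (evDA D A 1 a))
      (fun a => Pr P (evA A a))
      (fun j => Minter P D A (Sum.inl j)) (fun j => Minter P D A (Sum.inr j))
      (fun j => Exp P (fun ω => (A ω j : ℝ)))
      (fun j => ∑ a ∈ 𝒜, (a j : ℝ) * Pr P (evDA D A 0 a))
      (fun j => ∑ a ∈ 𝒜, (a j : ℝ) * Pr P (evDA D A 1 a))
      (condA1 P D A) (Pr P (evD D 0)) (Pr P (evD D 1)) (varD P D) (denomI P D A)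
      hPrD0 hPrD1 hs0ne hs1ne (fun j => rfl) (fun j => rfl) hPrA hExpA hcondA1 htot
  · -- varW entries
    have hVll : ∀ j, varWmat P D A (Sum.inl j) (Sum.inl u)
        = ((∑ a ∈ 𝒜, (a j : ℝ) * (a u : ℝ) * Pr P (evDA D A 0 a))
            + ∑ a ∈ 𝒜, (a j : ℝ) * (a u : ℝ) * Pr P (evDA D A 1 a))
          - Exp P (fun ω => (A ω j : ℝ)) * Exp P (fun ω => (A ω u : ℝ)) := by
      intro j
      simp only [varWmat, Matrix.of_apply, Wvec, Sum.elim_inl, Cov]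
      rw [hExpAA j u]
    have hVrl : ∀ j, varWmat P D A (Sum.inr j) (Sum.inl u)
        = (∑ a ∈ 𝒜, (a j : ℝ) * (a u : ℝ) * Pr P (evDA D A 1 a))
          - (∑ a ∈ 𝒜, (a j : ℝ) * Pr P (evDA D A 1 a)) * Exp P (fun ω => (A ω u : ℝ)) := by
      intro j
      simp only [varWmat, Matrix.of_apply, Wvec, Sum.elim_inl, Sum.elim_inr, Cov]
      rw [hExpADA j u, hExpAD j]
    have hkey := key_matrix P D A hPD (Sum.inl u)
    rw [Fintype.sum_sum_type] at hkey
    have hkeyu : (∑ a ∈ 𝒜, (a u : ℝ) * Pr P (evDA D A 1 a))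
        - Pr P (evD D 1) * Exp P (fun ω => (A ω u : ℝ))
        = (∑ j, Minter P D A (Sum.inl j) *
            (((∑ a ∈ 𝒜, (a j : ℝ) * (a u : ℝ) * Pr P (evDA D A 0 a))
              + ∑ a ∈ 𝒜, (a j : ℝ) * (a u : ℝ) * Pr P (evDA D A 1 a))
              - Exp P (fun ω => (A ω j : ℝ)) * Exp P (fun ω => (A ω u : ℝ))))
          + ∑ j, Minter P D A (Sum.inr j) *
            ((∑ a ∈ 𝒜, (a j : ℝ) * (a u : ℝ) * Pr P (evDA D A 1 a))
              - (∑ a ∈ 𝒜, (a j : ℝ) * Pr P (evDA D A 1 a))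
                * Exp P (fun ω => (A ω u : ℝ))) := by
      rw [← hcovDWl u, ← hkey]
      exact congrArg₂ (· + ·)
        (Finset.sum_congr rfl fun j _ => by rw [hVll j])
        (Finset.sum_congr rfl fun j _ => by rw [hVrl j])
    simp only [windI, piP]
    exact alg3 𝒜 (fun a => Pr P (evDA D A 0 a)) (fun a => Pr P (evDA D A 1 a))
      (fun a => Pr P (evA A a))
      (fun j => Minter P D A (Sum.inl j)) (fun j => Minter P D A (Sum.inr j))
      (fun j => Exp P (fun ω => (A ω j : ℝ)))
      (fun j => ∑ a ∈ 𝒜, (a j : ℝ) * Pr P (evDA D A 0 a))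
      (fun j => ∑ a ∈ 𝒜, (a j : ℝ) * Pr P (evDA D A 1 a))
      (condA1 P D A)
      (fun j u' => ∑ a ∈ 𝒜, (a j : ℝ) * (a u' : ℝ) * Pr P (evDA D A 0 a))
      (fun j u' => ∑ a ∈ 𝒜, (a j : ℝ) * (a u' : ℝ) * Pr P (evDA D A 1 a))
      (Pr P (evD D 0)) (Pr P (evD D 1)) (varD P D) (denomI P D A) u
      hPrD0 hPrD1 hs0ne hs1ne (fun j => rfl) (fun j => rfl) (fun j => rfl) (fun j => rfl)
      hPrA hExpA hcondA1 htot hvarD hkeyu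
end
end

section
/- (Theorem on the strata-fixed-effects regression under strong exogeneity.) Let Assumption 2 hold and assume positivity. Then Δ_sfe = Σ_{a∈𝒜} ω_sfe(a)·(μ(1,a) − μ(0,a)), where the weights ω_sfe(a) = P(D=1|A=a)·P(D=0|A=a)·P(A=a) / Σ_{a'∈𝒜} P(D=1|A=a')·P(D=0|A=a')·P(A=a') satisfy Σ_{a∈𝒜} ω_sfe(a) = 1 and ω_sfe(a) ≥ 0 for all a∈𝒜. -/
open MeasureTheory ProbabilityTheory BigOperators

noncomputable section

variable {Ω : Type} [MeasurableSpace Ω] {K : ℕ}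

set_option linter.unusedSectionVars false

lemma aux_meas_evDA {D : Ω → ℕ} {A : Ω → Fin K → ℕ} (hD : Measurable D) (hA : Measurable A)
    (d : ℕ) (a : Fin K → ℕ) : MeasurableSet (evDA D A d a) :=
  (hD (measurableSet_singleton d)).inter (hA (measurableSet_singleton a))

lemma aux_ind_eq (D : Ω → ℕ) (A : Ω → Fin K → ℕ) (d : ℕ) (a : Fin K → ℕ) :
    (fun ω => if D ω = d ∧ A ω = a then (1:ℝ) else 0)
      = (evDA D A d a).indicator (fun _ => (1:ℝ)) := by
  funext ω
  by_cases h : D ω = d ∧ A ω = a <;> simp [h, evDA, Set.indicator_apply]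

lemma aux_exp_ind (P : Measure Ω) {D : Ω → ℕ} {A : Ω → Fin K → ℕ}
    (hD : Measurable D) (hA : Measurable A) (d : ℕ) (a : Fin K → ℕ) :
    Exp P (fun ω => if D ω = d ∧ A ω = a then (1:ℝ) else 0) = Pr P (evDA D A d a) := by
  rw [Exp, Pr]
  rw [show (fun ω => if D ω = d ∧ A ω = a then (1:ℝ) else 0)
      = (evDA D A d a).indicator (fun _ => (1:ℝ)) from aux_ind_eq D A d a]
  exact integral_indicator_one (aux_meas_evDA hD hA d a)

lemma aux_int_ind (P : Measure Ω) [IsFiniteMeasure P] {D : Ω → ℕ} {A : Ω → Fin K → ℕ}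
    (hD : Measurable D) (hA : Measurable A) (d : ℕ) (a : Fin K → ℕ) :
    Integrable (fun ω => if D ω = d ∧ A ω = a then (1:ℝ) else 0) P := by
  rw [aux_ind_eq D A d a]
  exact (integrable_const (1:ℝ)).indicator (aux_meas_evDA hD hA d a)

lemma aux_mul_ind_eq (D : Ω → ℕ) (A : Ω → Fin K → ℕ) (d : ℕ) (a : Fin K → ℕ) (Y : Ω → ℝ) :
    (fun ω => Y ω * if D ω = d ∧ A ω = a then (1:ℝ) else 0)
      = (evDA D A d a).indicator Y := by
  funext ω
  by_cases h : D ω = d ∧ A ω = a <;> simp [h, evDA, Set.indicator_apply]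

lemma aux_int_mul (P : Measure Ω) {D : Ω → ℕ} {A : Ω → Fin K → ℕ}
    (hD : Measurable D) (hA : Measurable A) (d : ℕ) (a : Fin K → ℕ) {Y : Ω → ℝ}
    (hY : Integrable Y P) :
    Integrable (fun ω => Y ω * if D ω = d ∧ A ω = a then (1:ℝ) else 0) P := by
  rw [aux_mul_ind_eq]
  exact hY.indicator (aux_meas_evDA hD hA d a)

lemma aux_exp_mul (P : Measure Ω) {D : Ω → ℕ} {A : Ω → Fin K → ℕ}
    (hD : Measurable D) (hA : Measurable A) {Y : Ω → ℝ} (hY : Integrable Y P)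
    (hind : IndepFun (fun ω => (D ω, A ω)) Y P) (d : ℕ) (a : Fin K → ℕ) :
    Exp P (fun ω => Y ω * if D ω = d ∧ A ω = a then (1:ℝ) else 0)
      = Exp P Y * Pr P (evDA D A d a) := by
  have hgm : Measurable (fun p : ℕ × (Fin K → ℕ) => if p = (d, a) then (1:ℝ) else 0) := by
    exact measurable_const.ite (measurableSet_singleton (d, a)) measurable_const
  have hX : IndepFun (fun ω => if (D ω, A ω) = (d, a) then (1:ℝ) else 0) Y P := by
    have := hind.comp hgm measurable_id
    exact this
  have hmeq : (fun ω => if (D ω, A ω) = (d, a) then (1:ℝ) else 0)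
      = (fun ω => if D ω = d ∧ A ω = a then (1:ℝ) else 0) := by
    funext ω; simp [Prod.ext_iff]
  rw [hmeq] at hX
  have h := hX.integral_mul_eq_mul_integral
    (by rw [← hmeq]; exact (hgm.comp (hD.prodMk hA)).aestronglyMeasurable)
    hY.aestronglyMeasurable
  have : Exp P (fun ω => Y ω * if D ω = d ∧ A ω = a then (1:ℝ) else 0)
      = ∫ ω, (if D ω = d ∧ A ω = a then (1:ℝ) else 0) * Y ω ∂P := by
    rw [Exp]; congr 1; funext ω; ring
  rw [this]
  have h' : ∫ ω, (if D ω = d ∧ A ω = a then (1:ℝ) else 0) * Y ω ∂P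
      = (∫ ω, (if D ω = d ∧ A ω = a then (1:ℝ) else 0) ∂P) * ∫ ω, Y ω ∂P := h
  rw [h', ← Exp, ← Exp, aux_exp_ind P hD hA d a]
  ring

lemma aux_alg {q r μ1 μ0 Δ θa : ℝ} (hq : 0 < q) (hr : 0 < r)
    (h : μ0 * r + μ1 * q - Δ * q - θa * (r + q) = 0) :
    μ1 * q - Δ * q - θa * q = q * r / (q + r) * (μ1 - μ0 - Δ) := by
  have hs : q + r ≠ 0 := by positivity
  field_simp
  linear_combination h


set_option linter.unusedSectionVars false in

lemma aux_pt2 (D : Ω → ℕ) (A : Ω → Fin K → ℕ) (𝒜 : Finset (Fin K → ℕ))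
    (Ypot : ℕ → (Fin K → ℕ) → Ω → ℝ) (Δ : ℝ) (θ : (Fin K → ℕ) → ℝ)
    (hDbin : ∀ ω, D ω = 0 ∨ D ω = 1) (a : Fin K → ℕ) (ha : a ∈ 𝒜) (ω : Ω) :
    residSFE D A 𝒜 Ypot Δ θ ω * (if A ω = a then (1:ℝ) else 0)
      = Ypot 0 a ω * (if D ω = 0 ∧ A ω = a then (1:ℝ) else 0)
        + Ypot 1 a ω * (if D ω = 1 ∧ A ω = a then (1:ℝ) else 0)
        - Δ * (if D ω = 1 ∧ A ω = a then (1:ℝ) else 0)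
        - θ a * ((if D ω = 0 ∧ A ω = a then (1:ℝ) else 0)
            + (if D ω = 1 ∧ A ω = a then (1:ℝ) else 0)) := by
  by_cases h : A ω = a
  · rcases hDbin ω with hd | hd <;>
      simp [residSFE, Yobs, h, hd, Finset.sum_pair, mul_ite, mul_one, mul_zero,
        Finset.sum_ite_eq, ha] <;> ring
  · simp [residSFE, h]

set_option linter.unusedSectionVars false in

lemma aux_pt1 (D : Ω → ℕ) (A : Ω → Fin K → ℕ) (𝒜 : Finset (Fin K → ℕ))
    (Ypot : ℕ → (Fin K → ℕ) → Ω → ℝ) (Δ : ℝ) (θ : (Fin K → ℕ) → ℝ)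
    (hDbin : ∀ ω, D ω = 0 ∨ D ω = 1) (hAsupp : ∀ ω, A ω ∈ 𝒜) (ω : Ω) :
    residSFE D A 𝒜 Ypot Δ θ ω * (D ω : ℝ)
      = ∑ a ∈ 𝒜, (Ypot 1 a ω * (if D ω = 1 ∧ A ω = a then (1:ℝ) else 0)
          - Δ * (if D ω = 1 ∧ A ω = a then (1:ℝ) else 0)
          - θ a * (if D ω = 1 ∧ A ω = a then (1:ℝ) else 0)) := by
  rcases hDbin ω with hd | hd
  · simp [residSFE, hd]
  · have hsum1 : ∑ a ∈ 𝒜, (if A ω = a then (1:ℝ) else 0) = 1 := by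
      rw [Finset.sum_eq_single (A ω)]
      · simp
      · intro b _ hb; simp [Ne.symm hb]
      · intro h; exact absurd (hAsupp ω) h
    simp only [residSFE, Yobs, hd, Nat.cast_one, mul_one, Finset.sum_pair
      (by norm_num : (0:ℕ) ≠ 1), show ((1:ℕ) = 0) = False by simp,
      show ((1:ℕ) = 1) = True by simp, true_and, false_and, if_false, mul_zero,
      Finset.sum_const_zero, zero_add]
    simp only [Finset.sum_sub_distrib, ← Finset.mul_sum, hsum1, mul_one]

lemma aux_exp_term (P : Measure Ω) [IsProbabilityMeasure P] {D : Ω → ℕ} {A : Ω → Fin K → ℕ}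
    (hD : Measurable D) (hA : Measurable A) {Y : Ω → ℝ} (hY : Integrable Y P)
    (hind : IndepFun (fun ω => (D ω, A ω)) Y P) (d : ℕ) (a : Fin K → ℕ) (c1 c2 : ℝ) :
    Exp P (fun ω => Y ω * (if D ω = d ∧ A ω = a then (1:ℝ) else 0)
        - c1 * (if D ω = d ∧ A ω = a then (1:ℝ) else 0)
        - c2 * (if D ω = d ∧ A ω = a then (1:ℝ) else 0))
      = Exp P Y * Pr P (evDA D A d a) - c1 * Pr P (evDA D A d a)
        - c2 * Pr P (evDA D A d a) := by
  have hM := aux_exp_mul P hD hA hY hind d a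
  have hE := aux_exp_ind P hD hA d a
  have hI := aux_int_ind P hD hA d a
  have hY' := aux_int_mul P hD hA d a hY
  have hc1 : Integrable (fun ω => c1 * if D ω = d ∧ A ω = a then (1:ℝ) else 0) P :=
    hI.const_mul c1
  have hc2 : Integrable (fun ω => c2 * if D ω = d ∧ A ω = a then (1:ℝ) else 0) P :=
    hI.const_mul c2
  have hsub1 : Integrable (fun ω => (Y ω * if D ω = d ∧ A ω = a then (1:ℝ) else 0)
      - c1 * if D ω = d ∧ A ω = a then (1:ℝ) else 0) P := hY'.sub hc1
  simp only [Exp] at hM hE ⊢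
  rw [integral_sub hsub1 hc2, integral_sub hY' hc1,
      integral_const_mul _ _, integral_const_mul _ _, hM, hE]

lemma aux_exp_term2 (P : Measure Ω) [IsProbabilityMeasure P] {D : Ω → ℕ} {A : Ω → Fin K → ℕ}
    (hD : Measurable D) (hA : Measurable A) {Y0 Y1 : Ω → ℝ}
    (hY0 : Integrable Y0 P) (hY1 : Integrable Y1 P)
    (hind0 : IndepFun (fun ω => (D ω, A ω)) Y0 P)
    (hind1 : IndepFun (fun ω => (D ω, A ω)) Y1 P) (a : Fin K → ℕ) (c1 c2 : ℝ) :
    Exp P (fun ω => Y0 ω * (if D ω = 0 ∧ A ω = a then (1:ℝ) else 0)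
        + Y1 ω * (if D ω = 1 ∧ A ω = a then (1:ℝ) else 0)
        - c1 * (if D ω = 1 ∧ A ω = a then (1:ℝ) else 0)
        - c2 * ((if D ω = 0 ∧ A ω = a then (1:ℝ) else 0)
            + (if D ω = 1 ∧ A ω = a then (1:ℝ) else 0)))
      = Exp P Y0 * Pr P (evDA D A 0 a) + Exp P Y1 * Pr P (evDA D A 1 a)
        - c1 * Pr P (evDA D A 1 a)
        - c2 * (Pr P (evDA D A 0 a) + Pr P (evDA D A 1 a)) := by
  have hM0 := aux_exp_mul P hD hA hY0 hind0 0 a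
  have hM1 := aux_exp_mul P hD hA hY1 hind1 1 a
  have hE0 := aux_exp_ind P hD hA 0 a
  have hE1 := aux_exp_ind P hD hA 1 a
  have i0 := aux_int_mul P hD hA 0 a hY0
  have i1 := aux_int_mul P hD hA 1 a hY1
  have j0 := aux_int_ind P hD hA 0 a
  have j1 := aux_int_ind P hD hA 1 a
  have hadd : Integrable (fun ω => (Y0 ω * if D ω = 0 ∧ A ω = a then (1:ℝ) else 0)
      + Y1 ω * if D ω = 1 ∧ A ω = a then (1:ℝ) else 0) P := i0.add i1
  have hc1 : Integrable (fun ω => c1 * if D ω = 1 ∧ A ω = a then (1:ℝ) else 0) P :=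
    j1.const_mul c1
  have hjj : Integrable (fun ω => (if D ω = 0 ∧ A ω = a then (1:ℝ) else 0)
      + if D ω = 1 ∧ A ω = a then (1:ℝ) else 0) P := j0.add j1
  have hc2 : Integrable (fun ω => c2 * ((if D ω = 0 ∧ A ω = a then (1:ℝ) else 0)
      + if D ω = 1 ∧ A ω = a then (1:ℝ) else 0)) P := hjj.const_mul c2
  have hsub1 : Integrable (fun ω => ((Y0 ω * if D ω = 0 ∧ A ω = a then (1:ℝ) else 0)
      + Y1 ω * if D ω = 1 ∧ A ω = a then (1:ℝ) else 0)
      - c1 * if D ω = 1 ∧ A ω = a then (1:ℝ) else 0) P := hadd.sub hc1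
  simp only [Exp] at hM0 hM1 hE0 hE1 ⊢
  rw [integral_sub hsub1 hc2, integral_sub hadd hc1,
      integral_add i0 i1, integral_const_mul _ _, integral_const_mul _ _,
      integral_add j0 j1, hM0, hM1, hE0, hE1]

/-- Theorem on the strata-fixed-effects regression under strong exogeneity:
Δ_sfe = Σ_a ω_sfe(a)·(μ(1,a) − μ(0,a)), with nonnegative weights summing to one. -/
theorem sfe_regression_under_strong_exogeneity
    (P : Measure Ω) [IsProbabilityMeasure P]
    (D : Ω → ℕ) (A : Ω → Fin K → ℕ) (𝒜 : Finset (Fin K → ℕ))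
    (Ypot : ℕ → (Fin K → ℕ) → Ω → ℝ)
    (hD : Measurable D) (hA : Measurable A)
    (hDbin : ∀ ω, D ω = 0 ∨ D ω = 1)
    (hAsupp : ∀ ω, A ω ∈ 𝒜) (h𝒜0 : (0 : Fin K → ℕ) ∈ 𝒜)
    (hInt : ∀ d ∈ ({0, 1} : Finset ℕ), ∀ a ∈ 𝒜, Integrable (Ypot d a) P)
    (hpos : ∀ d ∈ ({0, 1} : Finset ℕ), ∀ a ∈ 𝒜, 0 < Pr P (evDA D A d a))
    (hIndep : ∀ d ∈ ({0, 1} : Finset ℕ), ∀ a ∈ 𝒜,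
      IndepFun (fun ω => (D ω, A ω)) (Ypot d a) P)
    (Δsfe : ℝ) (θ : (Fin K → ℕ) → ℝ)
    (hO1 : Exp P (fun ω => residSFE D A 𝒜 Ypot Δsfe θ ω * (D ω : ℝ)) = 0)
    (hO2 : ∀ a ∈ 𝒜,
      Exp P (fun ω => residSFE D A 𝒜 Ypot Δsfe θ ω * (if A ω = a then (1:ℝ) else 0)) = 0)
    :
    Δsfe = (∑ a ∈ 𝒜, wsfe P D A 𝒜 a * (muP P Ypot 1 a - muP P Ypot 0 a))
    ∧ (∑ a ∈ 𝒜, wsfe P D A 𝒜 a) = 1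
    ∧ ∀ a ∈ 𝒜, 0 ≤ wsfe P D A 𝒜 a := by
  have h0m : (0:ℕ) ∈ ({0,1}:Finset ℕ) := by simp
  have h1m : (1:ℕ) ∈ ({0,1}:Finset ℕ) := by simp
  have hqpos : ∀ a ∈ 𝒜, 0 < Pr P (evDA D A 1 a) := fun a ha => hpos 1 h1m a ha
  have hrpos : ∀ a ∈ 𝒜, 0 < Pr P (evDA D A 0 a) := fun a ha => hpos 0 h0m a ha
  have key2 : ∀ a ∈ 𝒜, muP P Ypot 0 a * Pr P (evDA D A 0 a)
      + muP P Ypot 1 a * Pr P (evDA D A 1 a) - Δsfe * Pr P (evDA D A 1 a)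
      - θ a * (Pr P (evDA D A 0 a) + Pr P (evDA D A 1 a)) = 0 := by
    intro a ha
    have hpw : (fun ω => residSFE D A 𝒜 Ypot Δsfe θ ω * (if A ω = a then (1:ℝ) else 0))
        = fun ω => Ypot 0 a ω * (if D ω = 0 ∧ A ω = a then (1:ℝ) else 0)
          + Ypot 1 a ω * (if D ω = 1 ∧ A ω = a then (1:ℝ) else 0)
          - Δsfe * (if D ω = 1 ∧ A ω = a then (1:ℝ) else 0)
          - θ a * ((if D ω = 0 ∧ A ω = a then (1:ℝ) else 0)
              + (if D ω = 1 ∧ A ω = a then (1:ℝ) else 0)) :=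
      funext (aux_pt2 D A 𝒜 Ypot Δsfe θ hDbin a ha)
    have h2 := hO2 a ha
    rw [hpw, aux_exp_term2 P hD hA (hInt 0 h0m a ha) (hInt 1 h1m a ha)
      (hIndep 0 h0m a ha) (hIndep 1 h1m a ha) a Δsfe (θ a)] at h2
    exact h2
  have key1 : ∑ a ∈ 𝒜, (muP P Ypot 1 a * Pr P (evDA D A 1 a)
      - Δsfe * Pr P (evDA D A 1 a) - θ a * Pr P (evDA D A 1 a)) = 0 := by
    have hpw : (fun ω => residSFE D A 𝒜 Ypot Δsfe θ ω * (D ω : ℝ))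
        = fun ω => ∑ a ∈ 𝒜, (Ypot 1 a ω * (if D ω = 1 ∧ A ω = a then (1:ℝ) else 0)
          - Δsfe * (if D ω = 1 ∧ A ω = a then (1:ℝ) else 0)
          - θ a * (if D ω = 1 ∧ A ω = a then (1:ℝ) else 0)) :=
      funext (aux_pt1 D A 𝒜 Ypot Δsfe θ hDbin hAsupp)
    have h1 := hO1
    rw [hpw, Exp, integral_finset_sum 𝒜 (fun a ha =>
      show Integrable (fun ω => (Ypot 1 a ω * if D ω = 1 ∧ A ω = a then (1:ℝ) else 0)
          - Δsfe * (if D ω = 1 ∧ A ω = a then (1:ℝ) else 0)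
          - θ a * (if D ω = 1 ∧ A ω = a then (1:ℝ) else 0)) P from
        Integrable.sub (Integrable.sub (aux_int_mul P hD hA 1 a (hInt 1 h1m a ha))
          ((aux_int_ind P hD hA 1 a).const_mul Δsfe))
          ((aux_int_ind P hD hA 1 a).const_mul (θ a)))] at h1
    rw [← h1]
    refine Finset.sum_congr rfl fun a ha => ?_
    have := aux_exp_term P hD hA (hInt 1 h1m a ha) (hIndep 1 h1m a ha) 1 a Δsfe (θ a)
    simp only [Exp] at this
    rw [this]
    rfl
  -- pass to weights
  have key3 : ∀ a ∈ 𝒜, muP P Ypot 1 a * Pr P (evDA D A 1 a)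
      - Δsfe * Pr P (evDA D A 1 a) - θ a * Pr P (evDA D A 1 a)
      = Pr P (evDA D A 1 a) * Pr P (evDA D A 0 a)
          / (Pr P (evDA D A 1 a) + Pr P (evDA D A 0 a))
        * (muP P Ypot 1 a - muP P Ypot 0 a - Δsfe) := fun a ha =>
    aux_alg (hqpos a ha) (hrpos a ha) (key2 a ha)
  have hPrA : ∀ a ∈ 𝒜, Pr P (evA A a) = Pr P (evDA D A 0 a) + Pr P (evDA D A 1 a) := by
    intro a ha
    have hsets : evA A a = evDA D A 0 a ∪ evDA D A 1 a := by
      ext ω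
      simp only [evA, evDA, Set.mem_setOf_eq, Set.mem_union]
      constructor
      · intro h; rcases hDbin ω with hd | hd
        · exact Or.inl ⟨hd, h⟩
        · exact Or.inr ⟨hd, h⟩
      · rintro (⟨_, h⟩ | ⟨_, h⟩) <;> exact h
    have hdisj : Disjoint (evDA D A 0 a) (evDA D A 1 a) := by
      rw [Set.disjoint_left]
      rintro ω ⟨h0, -⟩ ⟨h1, -⟩
      rw [h0] at h1; exact absurd h1 (by norm_num)
    rw [Pr, hsets, measure_union hdisj (aux_meas_evDA hD hA 1 a),
      ENNReal.toReal_add (measure_ne_top P _) (measure_ne_top P _)]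
    rfl
  have hterm : ∀ a ∈ 𝒜, condDgivenA P D A 1 a * condDgivenA P D A 0 a * Pr P (evA A a)
      = Pr P (evDA D A 1 a) * Pr P (evDA D A 0 a)
        / (Pr P (evDA D A 1 a) + Pr P (evDA D A 0 a)) := by
    intro a ha
    have hq := hqpos a ha
    have hr := hrpos a ha
    have hs : Pr P (evDA D A 1 a) + Pr P (evDA D A 0 a) ≠ 0 := by positivity
    rw [condDgivenA, condDgivenA, hPrA a ha]
    field_simp
    ring
  set t : (Fin K → ℕ) → ℝ := fun a => Pr P (evDA D A 1 a) * Pr P (evDA D A 0 a)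
    / (Pr P (evDA D A 1 a) + Pr P (evDA D A 0 a)) with ht
  have htpos : ∀ a ∈ 𝒜, 0 < t a := by
    intro a ha
    have hq := hqpos a ha
    have hr := hrpos a ha
    rw [ht]
    positivity
  have hTpos : 0 < ∑ a ∈ 𝒜, t a :=
    Finset.sum_pos htpos ⟨0, h𝒜0⟩
  have hTsum : (∑ a' ∈ 𝒜, condDgivenA P D A 1 a' * condDgivenA P D A 0 a' * Pr P (evA A a'))
      = ∑ a ∈ 𝒜, t a := Finset.sum_congr rfl fun a ha => hterm a ha
  have hw : ∀ a ∈ 𝒜, wsfe P D A 𝒜 a = t a / ∑ a' ∈ 𝒜, t a' := by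
    intro a ha
    rw [wsfe, hTsum, hterm a ha]
  have keyT : ∑ a ∈ 𝒜, t a * (muP P Ypot 1 a - muP P Ypot 0 a - Δsfe) = 0 := by
    rw [← Finset.sum_congr rfl key3]
    exact key1
  have keyD : ∑ a ∈ 𝒜, t a * (muP P Ypot 1 a - muP P Ypot 0 a)
      = Δsfe * ∑ a ∈ 𝒜, t a := by
    have expand : ∑ a ∈ 𝒜, t a * (muP P Ypot 1 a - muP P Ypot 0 a - Δsfe)
        = ∑ a ∈ 𝒜, t a * (muP P Ypot 1 a - muP P Ypot 0 a)
          - Δsfe * ∑ a ∈ 𝒜, t a := by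
      rw [Finset.mul_sum, ← Finset.sum_sub_distrib]
      exact Finset.sum_congr rfl fun a _ => by ring
    rw [expand] at keyT
    linarith
  refine ⟨?_, ?_, ?_⟩
  · have hgoal : ∑ a ∈ 𝒜, wsfe P D A 𝒜 a * (muP P Ypot 1 a - muP P Ypot 0 a)
        = (∑ a ∈ 𝒜, t a * (muP P Ypot 1 a - muP P Ypot 0 a)) / (∑ a' ∈ 𝒜, t a') := by
      rw [Finset.sum_div]
      refine Finset.sum_congr rfl fun a ha => ?_
      rw [hw a ha, div_mul_eq_mul_div]
    rw [hgoal, keyD, mul_div_assoc, div_self (ne_of_gt hTpos), mul_one]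
  · rw [Finset.sum_congr rfl hw, ← Finset.sum_div, div_self (ne_of_gt hTpos)]
  · intro a ha
    rw [hw a ha]
    exact div_nonneg (le_of_lt (htpos a ha)) (le_of_lt hTpos)
end
end
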